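/- arXiv:0710.1107 — 10 statements merged into one kernel-verified Lean document; each statement's English description precedes it below -/
import Mathlib

section
/- Let $a:\mathbb{R}_+\to\mathbb{R}_+$ be non-increasing with $\int_0^\infty a(s)\,ds=\infty$, and let $x:\mathbb{R}_+\to H$ be a $C^2$ solution of $\ddot{x}+a\dot{x}+\nabla G(x)=0$ with $\dot{x}$ globally Lipschitz continuous and $\int_0^\infty a(t)|\dot{x}(t)|^2\,dt<\infty$. Then for every $T>0$, $\liminf_{t\to\infty}\sup_{s\in[t,t+T]}|\dot{x}(s)|=0$. -/
open Set Filter MeasureTheory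

/-- If `a` is non-increasing with divergent integral, and the velocity of a solution is
Lipschitz with finite weighted kinetic energy, then the velocity is arbitrarily small on
arbitrarily long time intervals, infinitely often. -/
theorem stmt_2
    {H : Type*} [NormedAddCommGroup H] [InnerProductSpace ℝ H] [CompleteSpace H]
    (a : ℝ → ℝ) (ha_nonneg : ∀ t ≥ (0:ℝ), 0 ≤ a t) (ha_mono : AntitoneOn a (Set.Ici 0))
    (ha_div : ¬ MeasureTheory.IntegrableOn a (Set.Ici 0))
    (G : H → ℝ) (G' : H → H) (hG : ∀ y, HasGradientAt G (G' y) y)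
    (x : ℝ → H) (hx : ContDiff ℝ 2 x)
    (hode : ∀ t ≥ (0:ℝ), deriv (deriv x) t + a t • deriv x t + G' (x t) = 0)
    (K : NNReal) (hlip : LipschitzWith K (deriv x))
    (hdiss : MeasureTheory.IntegrableOn (fun t => a t * ‖deriv x t‖^2) (Set.Ici 0)) :
    ∀ T > (0:ℝ),
      Filter.liminf (fun t => ⨆ s ∈ Set.Icc t (t + T), ‖deriv x s‖) Filter.atTop = 0 := by
  intro T hT
  set v : ℝ → ℝ := fun t => ‖deriv x t‖ with hvdef
  have hv0 : ∀ t, 0 ≤ v t := fun t => norm_nonneg _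
  set f : ℝ → ℝ := fun t => ⨆ s ∈ Set.Icc t (t + T), ‖deriv x s‖ with hfdef
  have hf0 : ∀ t, 0 ≤ f t := fun t =>
    Real.iSup_nonneg fun s => Real.iSup_nonneg fun _ => norm_nonneg _
  set g : ℝ → ℝ := fun t => a t * ‖deriv x t‖ ^ 2 with hgdef
  have hg0 : ∀ t ∈ Set.Ici (0:ℝ), 0 ≤ g t := fun t ht =>
    mul_nonneg (ha_nonneg t ht) (by positivity)
  have hgae : ∀ {S : Set ℝ}, MeasurableSet S → S ⊆ Set.Ici 0 →
      (0 : ℝ → ℝ) ≤ᵐ[volume.restrict S] g := fun {S} hS hsub =>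
    ae_restrict_of_forall_mem hS (fun r hr => hg0 r (hsub hr))
  set C : ℝ := ∫ r in Set.Ici (0:ℝ), g r with hCdef
  have hC0 : 0 ≤ C := MeasureTheory.setIntegral_nonneg measurableSet_Ici (fun r hr => hg0 r hr)
  -- key claim
  have key : ∀ ε > (0:ℝ), ∃ᶠ t in atTop, f t ≤ ε := by
    intro ε hε
    by_contra hcon
    rw [Filter.not_frequently] at hcon
    obtain ⟨t₁, ht₁⟩ := Filter.eventually_atTop.mp hcon
    set t₀ : ℝ := max t₁ 0 with ht₀def
    have ht₀0 : (0:ℝ) ≤ t₀ := le_max_right _ _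
    have hK0 : (0:ℝ) ≤ (K:ℝ) := K.2
    set δ : ℝ := ε / (2 * ((K:ℝ) + 1)) with hδdef
    have hδ : 0 < δ := div_pos hε (by positivity)
    set L : ℝ := T + δ with hLdef
    have hL : 0 < L := by positivity
    set u : ℕ → ℝ := fun n => t₀ + n * L with hudef
    have hu0 : u 0 = t₀ := by simp [hudef]
    have huS : ∀ n, u (n + 1) = u n + L := by
      intro n; simp only [hudef]; push_cast; ring
    have ht₀u : ∀ n, t₀ ≤ u n := fun n => le_add_of_nonneg_right (by positivity)
    have hun0 : ∀ n, (0:ℝ) ≤ u n := fun n => le_trans ht₀0 (ht₀u n)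
    have humono : ∀ n, u n < u (n + 1) := fun n => by rw [huS]; linarith
    -- bad points
    have hs : ∀ n : ℕ, ∃ s, s ∈ Set.Icc (u n) (u n + T) ∧ ε < v s := by
      intro n
      have h1 : ¬ f (u n) ≤ ε := ht₁ (u n) (le_trans (le_max_left _ _) (ht₀u n))
      by_contra h2
      push_neg at h2
      exact h1 (Real.iSup_le (fun s => Real.iSup_le (fun hsmem => h2 s hsmem) hε.le) hε.le)
    choose s hs1 hs2 using hs
    -- lower bound for the energy on each block
    have claimC : ∀ n : ℕ,
        ((ε/2)^2 * a (u (n+1))) * δ ≤ ∫ r in Set.Ioc (u n) (u (n+1)), g r := by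
      intro n
      have hsub1 : Set.Ioc (s n) (s n + δ) ⊆ Set.Ioc (u n) (u (n+1)) :=
        Set.Ioc_subset_Ioc (hs1 n).1 (by rw [huS]; have := (hs1 n).2; simp only [hLdef]; linarith)
      have hblocksub : Set.Ioc (u n) (u (n+1)) ⊆ Set.Ici (0:ℝ) :=
        fun r hr => le_trans (hun0 n) hr.1.le
      have hval : ∀ r ∈ Set.Ioc (s n) (s n + δ), (ε/2)^2 * a (u (n+1)) ≤ g r := by
        intro r hr
        have hr1 : u n ≤ r := (hsub1 hr).1.le
        have hr2 : r ≤ u (n+1) := (hsub1 hr).2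
        have hr0 : (0:ℝ) ≤ r := le_trans (hun0 n) hr1
        have ha1 : a (u (n+1)) ≤ a r := ha_mono hr0 (hun0 (n+1)) hr2
        have ha0 : 0 ≤ a (u (n+1)) := ha_nonneg _ (hun0 _)
        have hdist : dist (s n) r ≤ δ := by
          rw [Real.dist_eq, abs_le]
          rcases hr with ⟨h1, h2⟩
          constructor <;> linarith
        have hlipd : dist (deriv x (s n)) (deriv x r) ≤ (K:ℝ) * δ :=
          le_trans (hlip.dist_le_mul (s n) r) (by
            exact mul_le_mul_of_nonneg_left hdist hK0)
        have h1 : v (s n) - v r ≤ dist (deriv x (s n)) (deriv x r) := by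
          simpa [hvdef, dist_eq_norm] using norm_sub_norm_le (deriv x (s n)) (deriv x r)
        have hKδ : (K:ℝ) * δ ≤ ε / 2 := by
          rw [hδdef, ← mul_div_assoc, div_le_div_iff₀ (by positivity) (by norm_num)]
          nlinarith
        have hvr : ε/2 ≤ v r := by
          have := hs2 n
          linarith
        have hsq : (ε/2)^2 ≤ v r ^ 2 := by nlinarith [hv0 r]
        calc (ε/2)^2 * a (u (n+1)) ≤ v r ^ 2 * a r :=
              mul_le_mul hsq ha1 ha0 (by positivity)
          _ = g r := by simp only [hgdef, hvdef]; ring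
      have hIntSmall : IntegrableOn g (Set.Ioc (s n) (s n + δ)) :=
        hdiss.mono_set (hsub1.trans hblocksub)
      have h1 := MeasureTheory.setIntegral_ge_of_const_le (μ := volume)
        (measurableSet_Ioc) (by rw [Real.volume_Ioc]; exact ENNReal.ofReal_ne_top)
        hval hIntSmall
      rw [Real.volume_real_Ioc_of_le (by linarith), smul_eq_mul] at h1
      have heq : s n + δ - s n = δ := by ring
      rw [heq] at h1
      have h2 : (∫ r in Set.Ioc (s n) (s n + δ), g r) ≤
          ∫ r in Set.Ioc (u n) (u (n+1)), g r :=
        MeasureTheory.setIntegral_mono_set (hdiss.mono_set hblocksub)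
          (hgae measurableSet_Ioc hblocksub) (hsub1.eventuallyLE)
      linarith
    -- sum the blocks
    have claimD : ∀ N : ℕ,
        ∑ n ∈ Finset.range N, ((ε/2)^2 * a (u (n+1))) * δ ≤ ∫ r in Set.Ioc t₀ (u N), g r := by
      intro N
      induction N with
      | zero => simp [hu0]
      | succ N ih =>
        have hsplit : Set.Ioc t₀ (u N) ∪ Set.Ioc (u N) (u (N+1)) = Set.Ioc t₀ (u (N+1)) :=
          Set.Ioc_union_Ioc_eq_Ioc (ht₀u N) (humono N).le
        have hint1 : IntegrableOn g (Set.Ioc t₀ (u N)) :=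
          hdiss.mono_set (fun r hr => le_trans ht₀0 hr.1.le)
        have hint2 : IntegrableOn g (Set.Ioc (u N) (u (N+1))) :=
          hdiss.mono_set (fun r hr => le_trans (hun0 N) hr.1.le)
        rw [Finset.sum_range_succ, ← hsplit,
          MeasureTheory.setIntegral_union (Set.Ioc_disjoint_Ioc_of_le le_rfl) measurableSet_Ioc hint1 hint2]
        exact add_le_add ih (claimC N)
    have hCbound : ∀ N : ℕ, ∫ r in Set.Ioc t₀ (u N), g r ≤ C := by
      intro N
      have hsub : Set.Ioc t₀ (u N) ⊆ Set.Ici (0:ℝ) := fun r hr => le_trans ht₀0 hr.1.le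
      exact MeasureTheory.setIntegral_mono_set hdiss (hgae measurableSet_Ici Set.Subset.rfl)
        (hsub.eventuallyLE)
    set c : ℝ := (ε/2)^2 * δ with hcdef
    have hc : 0 < c := by positivity
    have hsum1 : ∀ N : ℕ, ∑ n ∈ Finset.range N, a (u (n+1)) ≤ C / c := by
      intro N
      rw [le_div_iff₀ hc]
      calc (∑ n ∈ Finset.range N, a (u (n+1))) * c
          = ∑ n ∈ Finset.range N, ((ε/2)^2 * a (u (n+1))) * δ := by
            rw [Finset.sum_mul]
            exact Finset.sum_congr rfl (fun n _ => by rw [hcdef]; ring)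
        _ ≤ C := le_trans (claimD N) (hCbound N)
    have hsum2 : ∀ N : ℕ, ∑ n ∈ Finset.range N, a (u n) ≤ a t₀ + C / c := by
      intro N
      have hat₀ : 0 ≤ a t₀ := ha_nonneg t₀ ht₀0
      have hCc : 0 ≤ C / c := div_nonneg hC0 hc.le
      cases N with
      | zero => simp; linarith
      | succ N =>
        rw [Finset.sum_range_succ']
        have := hsum1 N
        rw [hu0] at *
        linarith
    -- integrability of a on bounded intervals
    have haInt : ∀ p q : ℝ, 0 ≤ p → IntegrableOn a (Set.Ioc p q) := by
      intro p q hp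
      rcases le_or_gt q p with h | h
      · rw [Set.Ioc_eq_empty (not_lt.mpr h)]; exact integrableOn_empty
      · have hsub : Set.Icc p q ⊆ Set.Ici 0 := fun r hr => le_trans hp hr.1
        exact (AntitoneOn.integrableOn_isCompact isCompact_Icc (ha_mono.mono hsub)).mono_set
          Set.Ioc_subset_Icc_self
    have claimE : ∀ n : ℕ, ∫ r in Set.Ioc (u n) (u (n+1)), a r ≤ a (u n) * L := by
      intro n
      have hub : ∀ r ∈ Set.Ioc (u n) (u (n+1)), a r ≤ a (u n) :=
        fun r hr => ha_mono (hun0 n) (le_trans (hun0 n) hr.1.le) hr.1.le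
      calc ∫ r in Set.Ioc (u n) (u (n+1)), a r
          ≤ ∫ _ in Set.Ioc (u n) (u (n+1)), a (u n) :=
            MeasureTheory.setIntegral_mono_on (haInt _ _ (hun0 n))
              (integrableOn_const (by rw [Real.volume_Ioc]; exact ENNReal.ofReal_ne_top))
              measurableSet_Ioc hub
        _ = a (u n) * L := by
            rw [MeasureTheory.setIntegral_const, Real.volume_real_Ioc_of_le (humono n).le, huS,
              show u n + L - u n = L by ring, smul_eq_mul]
            ring
    have claimF : ∀ N : ℕ,
        ∫ r in Set.Ioc t₀ (u N), a r ≤ L * ∑ n ∈ Finset.range N, a (u n) := by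
      intro N
      induction N with
      | zero => simp [hu0]
      | succ N ih =>
        have hsplit : Set.Ioc t₀ (u N) ∪ Set.Ioc (u N) (u (N+1)) = Set.Ioc t₀ (u (N+1)) :=
          Set.Ioc_union_Ioc_eq_Ioc (ht₀u N) (humono N).le
        rw [Finset.sum_range_succ, ← hsplit,
          MeasureTheory.setIntegral_union (Set.Ioc_disjoint_Ioc_of_le le_rfl) measurableSet_Ioc
            (haInt _ _ ht₀0) (haInt _ _ (hun0 N)), mul_add]
        have := claimE N
        linarith
    set M : ℝ := (∫ r in Set.Ioc (0:ℝ) t₀, a r) + L * (a t₀ + C / c) with hMdef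
    have hbound : ∀ N : ℕ, ∫ r in Set.Ioc (0:ℝ) (u N), a r ≤ M := by
      intro N
      have hsplit : Set.Ioc (0:ℝ) t₀ ∪ Set.Ioc t₀ (u N) = Set.Ioc (0:ℝ) (u N) :=
        Set.Ioc_union_Ioc_eq_Ioc ht₀0 (ht₀u N)
      rw [← hsplit,
        MeasureTheory.setIntegral_union (Set.Ioc_disjoint_Ioc_of_le le_rfl) measurableSet_Ioc
          (haInt 0 t₀ le_rfl) (haInt t₀ (u N) ht₀0)]
      have h1 := le_trans (claimF N) (mul_le_mul_of_nonneg_left (hsum2 N) hL.le)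
      rw [hMdef]
      linarith
    -- contradiction with non-integrability of a
    apply ha_div
    rw [integrableOn_Ici_iff_integrableOn_Ioi]
    have hu_tendsto : Tendsto u atTop atTop := by
      apply tendsto_atTop_add_const_left
      exact Tendsto.atTop_mul_const hL tendsto_natCast_atTop_atTop
    apply MeasureTheory.integrableOn_Ioi_of_intervalIntegral_norm_bounded M 0
      (fun N => haInt 0 (u N) le_rfl) hu_tendsto
    apply Filter.Eventually.of_forall
    intro N
    rw [intervalIntegral.integral_of_le (hun0 N)]
    rw [MeasureTheory.setIntegral_congr_fun measurableSet_Ioc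
      (fun r hr => by rw [Real.norm_eq_abs, abs_of_nonneg (ha_nonneg r hr.1.le)])]
    exact hbound N
  -- conclude about the liminf
  have hcob : IsCoboundedUnder (· ≥ ·) atTop f :=
    Filter.IsCoboundedUnder.of_frequently_le (key 1 one_pos)
  have hbdd : IsBoundedUnder (· ≥ ·) atTop f := isBoundedUnder_of ⟨0, fun t => hf0 t⟩
  refine le_antisymm ?_ (Filter.le_liminf_of_le hcob (Filter.Eventually.of_forall hf0))
  by_contra hcontra
  push_neg at hcontra
  have h1 := Filter.liminf_le_of_frequently_le (key _ (half_pos hcontra)) hbdd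
  linarith
end

section
/- Let $x$ be a solution of $\ddot{x}+a\dot{x}+g(x)=0$ on $[T_0,T_1]$ with $a:\mathbb{R}_+\to\mathbb{R}_+$ non-increasing and $g=\nabla G$ Lipschitz with constant $L$ on $x([T_0,T_1])$. If $|\dot{x}(t)|\le\varepsilon$ for all $t\in[T_0,T_1]$, then for every $\delta\in(0,\tfrac{T_1-T_0}{2}]$ and every $t\in[T_0+\delta,T_1-\delta]$ one has $|g(x(t))|\le\big(\tfrac{2}{\delta}+a(T_0)+\tfrac{L\delta}{2}\big)\varepsilon$. -/
open Set Filter MeasureTheory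

/-- If the velocity is at most `ε` on `[T₀, T₁]`, then `‖g(x(t))‖` is proportionally small
on the shrunk interval `[T₀+δ, T₁-δ]`. -/
theorem stmt_3
    {H : Type*} [NormedAddCommGroup H] [InnerProductSpace ℝ H] [CompleteSpace H]
    (a : ℝ → ℝ) (ha_nonneg : ∀ t ≥ (0:ℝ), 0 ≤ a t) (ha_mono : AntitoneOn a (Set.Ici 0))
    (g : H → H) (L : ℝ) (hL : 0 ≤ L)
    (T₀ T₁ : ℝ) (hT₀ : 0 ≤ T₀) (hT : T₀ < T₁)
    (x : ℝ → H) (hx : ContDiff ℝ 2 x)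
    (hlip : ∀ s ∈ Set.Icc T₀ T₁, ∀ t ∈ Set.Icc T₀ T₁,
      ‖g (x s) - g (x t)‖ ≤ L * ‖x s - x t‖)
    (hode : ∀ t ∈ Set.Icc T₀ T₁, deriv (deriv x) t + a t • deriv x t + g (x t) = 0)
    (ε : ℝ) (hε : ∀ t ∈ Set.Icc T₀ T₁, ‖deriv x t‖ ≤ ε) :
    ∀ δ, 0 < δ → δ ≤ (T₁ - T₀) / 2 →
      ∀ t ∈ Set.Icc (T₀ + δ) (T₁ - δ),
        ‖g (x t)‖ ≤ (2 / δ + a T₀ + L * δ / 2) * ε := by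
  intro δ hδ hδ2 t ht
  obtain ⟨ht0, ht1⟩ := ht
  have hε0 : 0 ≤ ε := le_trans (norm_nonneg _) (hε T₀ ⟨le_rfl, hT.le⟩)
  set u := t + δ with hu
  have htu : t ≤ u := by simp only [hu]; linarith
  have hsub : Set.Icc t u ⊆ Set.Icc T₀ T₁ :=
    Set.Icc_subset_Icc (by linarith) (by simp only [hu]; linarith)
  have huIcc : Set.uIcc t u = Set.Icc t u := Set.uIcc_of_le htu
  have htmem : t ∈ Set.Icc T₀ T₁ := hsub ⟨le_rfl, htu⟩
  have humem : u ∈ Set.Icc T₀ T₁ := hsub ⟨htu, le_rfl⟩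
  -- regularity
  have hx' : Differentiable ℝ x := hx.differentiable two_ne_zero
  have h2 : ContDiff ℝ 1 (deriv x) := by
    have h11 : ContDiff ℝ (1 + 1) x := by norm_num; exact hx
    exact (contDiff_succ_iff_deriv.mp h11).2.2
  have hdx : Differentiable ℝ (deriv x) := h2.differentiable one_ne_zero
  have hddx : Continuous (deriv (deriv x)) := by
    have h01 : ContDiff ℝ (0 + 1) (deriv x) := by norm_num; exact h2
    exact ((contDiff_succ_iff_deriv.mp h01).2.2).continuous
  -- continuity of g ∘ x
  have hgx : ContinuousOn (fun s => g (x s)) (Set.Icc T₀ T₁) := by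
    have hglip : LipschitzOnWith (Real.toNNReal L) g (x '' Set.Icc T₀ T₁) := by
      rw [lipschitzOnWith_iff_norm_sub_le]
      rintro p ⟨s, hs, rfl⟩ q ⟨r, hr, rfl⟩
      calc ‖g (x s) - g (x r)‖ ≤ L * ‖x s - x r‖ := hlip s hs r hr
        _ = Real.toNNReal L * ‖x s - x r‖ := by rw [Real.coe_toNNReal L hL]
    exact hglip.continuousOn.comp hx'.continuous.continuousOn (Set.mapsTo_image _ _)
  -- displacement bound
  have hxd : ∀ s ∈ Set.Icc t u, ‖x s - x t‖ ≤ ε * (s - t) :=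
    norm_image_sub_le_of_norm_deriv_le_segment'
      (fun r _ => (hx' r).hasDerivAt.hasDerivWithinAt)
      (fun r hr => hε r (hsub (Set.Ico_subset_Icc_self hr)))
  -- integrability
  have haI : IntervalIntegrable a volume t u := by
    apply AntitoneOn.intervalIntegrable
    apply ha_mono.mono
    rw [huIcc]
    exact hsub.trans (fun s hs => le_trans hT₀ hs.1)
  have haxI : IntervalIntegrable (fun s => a s • deriv x s) volume t u := by
    rw [intervalIntegrable_iff_integrableOn_Icc_of_le htu]
    exact ((intervalIntegrable_iff_integrableOn_Icc_of_le htu).mp haI).smul_continuousOn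
      hdx.continuous.continuousOn isCompact_Icc
  have hgxI : IntervalIntegrable (fun s => g (x t) - g (x s)) volume t u := by
    apply ContinuousOn.intervalIntegrable
    rw [huIcc]
    exact continuousOn_const.sub (hgx.mono hsub)
  have hddI : IntervalIntegrable (deriv (deriv x)) volume t u := hddx.intervalIntegrable t u
  -- FTC
  have hftc : ∫ s in t..u, deriv (deriv x) s = deriv x u - deriv x t :=
    intervalIntegral.integral_deriv_eq_sub (fun s _ => hdx s) hddI
  -- key identity
  have key : δ • g (x t) = (∫ s in t..u, (g (x t) - g (x s))) - (deriv x u - deriv x t)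
      - ∫ s in t..u, a s • deriv x s := by
    rw [← hftc, ← intervalIntegral.integral_sub hgxI hddI,
      ← intervalIntegral.integral_sub (hgxI.sub hddI) haxI]
    have hconst : δ • g (x t) = ∫ s in t..u, g (x t) := by
      rw [intervalIntegral.integral_const]
      congr 1
      simp [hu]
    rw [hconst]
    apply intervalIntegral.integral_congr
    intro s hs
    rw [huIcc] at hs
    have h := hode s (hsub hs)
    calc g (x t)
        = g (x t) - g (x s) - deriv (deriv x) s - a s • deriv x s
          + (deriv (deriv x) s + a s • deriv x s + g (x s)) := by abel
      _ = g (x t) - g (x s) - deriv (deriv x) s - a s • deriv x s := by rw [h, add_zero]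
  -- bound A
  have hA : ‖∫ s in t..u, (g (x t) - g (x s))‖ ≤ L * ε * δ ^ 2 / 2 := by
    calc ‖∫ s in t..u, (g (x t) - g (x s))‖
        ≤ ∫ s in t..u, ‖g (x t) - g (x s)‖ :=
          intervalIntegral.norm_integral_le_integral_norm htu
      _ ≤ ∫ s in t..u, (L * ε) * (s - t) := by
          apply intervalIntegral.integral_mono_on htu hgxI.norm
          · exact (continuous_const.mul (continuous_id.sub continuous_const)).intervalIntegrable t u
          · intro s hs
            calc ‖g (x t) - g (x s)‖ = ‖g (x s) - g (x t)‖ := norm_sub_rev _ _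
              _ ≤ L * ‖x s - x t‖ := hlip s (hsub hs) t htmem
              _ ≤ L * (ε * (s - t)) := by
                  exact mul_le_mul_of_nonneg_left (hxd s hs) hL
              _ = (L * ε) * (s - t) := by ring
      _ = L * ε * δ ^ 2 / 2 := by
          rw [intervalIntegral.integral_const_mul,
            intervalIntegral.integral_sub (continuous_id'.intervalIntegrable t u) intervalIntegrable_const,
            integral_id, intervalIntegral.integral_const]
          simp only [hu, smul_eq_mul]
          ring
  -- bound B
  have hB : ‖deriv x u - deriv x t‖ ≤ 2 * ε := by
    calc ‖deriv x u - deriv x t‖ ≤ ‖deriv x u‖ + ‖deriv x t‖ := norm_sub_le _ _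
      _ ≤ ε + ε := add_le_add (hε u humem) (hε t htmem)
      _ = 2 * ε := by ring
  -- bound C
  have hC : ‖∫ s in t..u, a s • deriv x s‖ ≤ a T₀ * ε * δ := by
    have hb : ∀ s ∈ Set.uIoc t u, ‖a s • deriv x s‖ ≤ a T₀ * ε := by
      intro s hs
      rw [Set.uIoc_of_le htu] at hs
      have hsmem : s ∈ Set.Icc T₀ T₁ := hsub ⟨hs.1.le, hs.2⟩
      have hs0 : (0:ℝ) ≤ s := le_trans hT₀ hsmem.1
      rw [norm_smul, Real.norm_eq_abs, abs_of_nonneg (ha_nonneg s hs0)]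
      exact mul_le_mul (ha_mono (Set.mem_Ici.mpr hT₀) (Set.mem_Ici.mpr hs0) hsmem.1)
        (hε s hsmem) (norm_nonneg _) (ha_nonneg T₀ hT₀)
    calc ‖∫ s in t..u, a s • deriv x s‖ ≤ (a T₀ * ε) * |u - t| :=
          intervalIntegral.norm_integral_le_of_norm_le_const hb
      _ = a T₀ * ε * δ := by rw [show u - t = δ by simp [hu], abs_of_pos hδ]
  -- combine
  have hmain : δ * ‖g (x t)‖ ≤ L * ε * δ ^ 2 / 2 + 2 * ε + a T₀ * ε * δ := by
    have : δ * ‖g (x t)‖ = ‖δ • g (x t)‖ := by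
      rw [norm_smul, Real.norm_eq_abs, abs_of_pos hδ]
    rw [this, key]
    calc ‖(∫ s in t..u, (g (x t) - g (x s))) - (deriv x u - deriv x t)
          - ∫ s in t..u, a s • deriv x s‖
        ≤ ‖(∫ s in t..u, (g (x t) - g (x s))) - (deriv x u - deriv x t)‖
          + ‖∫ s in t..u, a s • deriv x s‖ := norm_sub_le _ _
      _ ≤ ‖∫ s in t..u, (g (x t) - g (x s))‖ + ‖deriv x u - deriv x t‖
          + ‖∫ s in t..u, a s • deriv x s‖ := by
            exact add_le_add (norm_sub_le _ _) le_rfl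
      _ ≤ L * ε * δ ^ 2 / 2 + 2 * ε + a T₀ * ε * δ := by
            exact add_le_add (add_le_add hA hB) hC
  have hfinal : ‖g (x t)‖ * δ ≤ ((2 / δ + a T₀ + L * δ / 2) * ε) * δ := by
    have heq : ((2 / δ + a T₀ + L * δ / 2) * ε) * δ
        = L * ε * δ ^ 2 / 2 + 2 * ε + a T₀ * ε * δ := by
      field_simp
      ring
    rw [heq]
    linarith
  exact le_of_mul_le_mul_right hfinal hδ
end

section
/- Let $a:\mathbb{R}_+\to\mathbb{R}_+$ be continuous, $G:H\to\mathbb{R}$ be $C^1$ with $\inf G>-\infty$, and let $x$ be a solution of $\ddot{x}+a\dot{x}+\nabla G(x)=0$. Then for all $t\ge 0$, $\mathcal{E}(t)-\inf G\ge (\mathcal{E}(0)-\inf G)\,e^{-2\int_0^t a(s)\,ds}$, where $\mathcal{E}(t)=\tfrac12|\dot{x}(t)|^2+G(x(t))$. -/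
open Set Filter MeasureTheory

local notation "⟪" x ", " y "⟫" => @inner ℝ _ _ x y

/-- Lower bound on the energy decay:
`E(t) - inf G ≥ (E(0) - inf G) e^{-2∫₀ᵗ a}` for all `t ≥ 0`. -/
theorem stmt_6
    {H : Type*} [NormedAddCommGroup H] [InnerProductSpace ℝ H] [CompleteSpace H]
    (a : ℝ → ℝ) (ha_cont : Continuous a) (ha_nonneg : ∀ t ≥ (0:ℝ), 0 ≤ a t)
    (G : H → ℝ) (G' : H → H) (hG : ∀ y, HasGradientAt G (G' y) y)
    (hG'cont : Continuous G')
    (hGbdd : BddBelow (Set.range G))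
    (x : ℝ → H) (hx : ContDiff ℝ 2 x)
    (hode : ∀ t ≥ (0:ℝ), deriv (deriv x) t + a t • deriv x t + G' (x t) = 0)
    (E : ℝ → ℝ) (hE : ∀ t, E t = (1/2) * ‖deriv x t‖^2 + G (x t)) :
    ∀ t ≥ (0:ℝ),
      E t - sInf (Set.range G) ≥
        (E 0 - sInf (Set.range G)) * Real.exp (-2 * ∫ s in (0:ℝ)..t, a s) := by
  intro t ht
  set m := sInf (Set.range G) with hm
  have hmle : ∀ s : ℝ, m ≤ G (x s) := fun s => csInf_le hGbdd ⟨x s, rfl⟩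
  -- differentiability of x and deriv x
  have hx2 : ContDiff ℝ ((1:ℕ∞)+1) x := by
    exact hx.of_le (by norm_num)
  have hxd : Differentiable ℝ x := hx.differentiable two_ne_zero
  have hx'd : Differentiable ℝ (deriv x) :=
    ((contDiff_succ_iff_deriv.mp hx2).2.2).differentiable (by simp)
  -- the antiderivative of a
  set A : ℝ → ℝ := fun u => ∫ s in (0:ℝ)..u, a s with hA
  have hAderiv : ∀ u : ℝ, HasDerivAt A (a u) u := fun u =>
    intervalIntegral.integral_hasDerivAt_right (ha_cont.intervalIntegrable _ _)
      ha_cont.aestronglyMeasurable.stronglyMeasurableAtFilter ha_cont.continuousAt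
  -- derivative of E
  have hEderiv : ∀ u : ℝ, HasDerivAt E
      (⟪deriv x u, deriv (deriv x) u⟫ + ⟪G' (x u), deriv x u⟫) u := by
    intro u
    have h1 : HasDerivAt (fun s => ⟪deriv x s, deriv x s⟫)
        (⟪deriv x u, deriv (deriv x) u⟫ + ⟪deriv (deriv x) u, deriv x u⟫) u :=
      ((hx'd u).hasDerivAt).inner ℝ ((hx'd u).hasDerivAt)
    have h2 : HasDerivAt (fun s => G (x s)) (⟪G' (x u), deriv x u⟫) u := by
      have := (hG (x u)).hasFDerivAt.comp_hasDerivAt u ((hxd u).hasDerivAt)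
      simp [InnerProductSpace.toDual_apply_apply] at this; exact this
    have h3 := (h1.const_mul (1/2 : ℝ)).add h2
    have heq : E = fun s => (1/2 : ℝ) * ⟪deriv x s, deriv x s⟫ + G (x s) := by
      funext s
      rw [hE s, real_inner_self_eq_norm_sq]
    rw [heq]
    refine h3.congr_deriv ?_
    rw [real_inner_comm (deriv (deriv x) u) (deriv x u)]
    ring
  -- derivative value on [0,∞)
  have hEd' : ∀ u ≥ (0:ℝ), HasDerivAt E (-(a u * ‖deriv x u‖^2)) u := by
    intro u hu
    have h := hEderiv u
    have hsum : ⟪deriv x u, deriv (deriv x) u⟫ + ⟪G' (x u), deriv x u⟫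
        = -(a u * ‖deriv x u‖^2) := by
      have h0 := hode u hu
      have : deriv (deriv x) u + G' (x u) = -(a u • deriv x u) := by
        have := hode u hu; linear_combination (norm := module) this
      calc ⟪deriv x u, deriv (deriv x) u⟫ + ⟪G' (x u), deriv x u⟫
          = ⟪deriv (deriv x) u + G' (x u), deriv x u⟫ := by
            rw [inner_add_left, real_inner_comm]
        _ = ⟪-(a u • deriv x u), deriv x u⟫ := by rw [this]
        _ = -(a u * ‖deriv x u‖^2) := by
            rw [inner_neg_left, real_inner_smul_left, real_inner_self_eq_norm_sq]
    rwa [hsum] at h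
  -- F := (E - m) * exp(2A) is monotone on [0,∞)
  set F : ℝ → ℝ := fun u => (E u - m) * Real.exp (2 * A u) with hF
  have hFderiv : ∀ u : ℝ, HasDerivAt F
      ((⟪deriv x u, deriv (deriv x) u⟫ + ⟪G' (x u), deriv x u⟫) * Real.exp (2 * A u)
        + (E u - m) * (Real.exp (2 * A u) * (2 * a u))) u := by
    intro u
    exact ((hEderiv u).sub_const m).mul (((hAderiv u).const_mul 2).exp)
  have hFmono : MonotoneOn F (Set.Ici (0:ℝ)) := by
    apply monotoneOn_of_deriv_nonneg (convex_Ici 0)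
    · exact fun u _ => ((hFderiv u).continuousAt).continuousWithinAt
    · intro u hu
      exact ((hFderiv u).differentiableAt).differentiableWithinAt
    · intro u hu
      rw [interior_Ici] at hu
      have hu0 : (0:ℝ) ≤ u := le_of_lt hu
      have h1 : HasDerivAt E (-(a u * ‖deriv x u‖^2)) u := hEd' u hu0
      have hd : deriv F u = (-(a u * ‖deriv x u‖^2)) * Real.exp (2 * A u)
          + (E u - m) * (Real.exp (2 * A u) * (2 * a u)) := by
        have := ((h1.sub_const m).mul (((hAderiv u).const_mul 2).exp))
        exact this.deriv
      rw [hd]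
      have hexp : (0:ℝ) < Real.exp (2 * A u) := Real.exp_pos _
      have ha' := ha_nonneg u hu0
      have hEm : E u - m = (1/2) * ‖deriv x u‖^2 + (G (x u) - m) := by
        rw [hE u]; ring
      have hg := hmle u
      have heq2 : -(a u * ‖deriv x u‖ ^ 2) * Real.exp (2 * A u)
          + (E u - m) * (Real.exp (2 * A u) * (2 * a u))
          = 2 * (a u * (G (x u) - m)) * Real.exp (2 * A u) := by
        rw [hEm]; ring
      rw [heq2]
      have : 0 ≤ a u * (G (x u) - m) := mul_nonneg ha' (sub_nonneg.mpr hg)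
      positivity
  -- conclude
  have hF0 : F 0 = E 0 - m := by
    simp [hF, hA, intervalIntegral.integral_same]
  have hle : F 0 ≤ F t := hFmono (Set.self_mem_Ici) ht ht
  rw [hF0] at hle
  have hexp : (0:ℝ) < Real.exp (2 * A t) := Real.exp_pos _
  simp only [hF] at hle
  have h2 : Real.exp (2 * A t) * Real.exp (-2 * A t) = 1 := by
    rw [← Real.exp_add]; norm_num
  calc (E 0 - m) * Real.exp (-2 * A t)
      ≤ ((E t - m) * Real.exp (2 * A t)) * Real.exp (-2 * A t) :=
        mul_le_mul_of_nonneg_right hle (Real.exp_pos _).le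
    _ = E t - m := by rw [mul_assoc, h2, mul_one]
end

section
/- If $a:\mathbb{R}_+\to\mathbb{R}_+$ and $\mathcal{E}:\mathbb{R}_+\to\mathbb{R}$ are non-increasing with $\mathcal{E}\ge m$, $\int_0^\infty a(s)(\mathcal{E}(s)-m)\,ds<\infty$, and there exists $c>0$ such that $a(t)\ge c/t$ for all large $t$, then $t\,a(t)(\mathcal{E}(t)-m)\to 0$ as $t\to\infty$; in particular $\mathcal{E}(t)-m=o\big(1/(t\,a(t))\big)$. -/
open Set Filter MeasureTheory

/-- Rate of convergence of the energy: if `a(t) ≥ c/t` for large `t`, then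
`t a(t) (E(t) - m) → 0`, i.e. `E(t) - m = o(1/(t a(t)))`. -/
theorem stmt_8
    (a : ℝ → ℝ) (ha_nonneg : ∀ t ≥ (0:ℝ), 0 ≤ a t) (ha_mono : AntitoneOn a (Set.Ici 0))
    (E : ℝ → ℝ) (hE_mono : AntitoneOn E (Set.Ici 0))
    (m : ℝ) (hE_ge : ∀ t ≥ (0:ℝ), m ≤ E t)
    (hsum : MeasureTheory.IntegrableOn (fun s => a s * (E s - m)) (Set.Ici 0))
    (c : ℝ) (hc : 0 < c) (t₀ : ℝ) (ht₀ : 0 < t₀) (ha_low : ∀ t ≥ t₀, c / t ≤ a t) :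
    Filter.Tendsto (fun t => t * a t * (E t - m)) Filter.atTop (nhds 0) := by
  set g : ℝ → ℝ := fun s => a s * (E s - m) with hg
  have hg_nonneg : ∀ t ≥ (0:ℝ), 0 ≤ g t := fun t ht =>
    mul_nonneg (ha_nonneg t ht) (sub_nonneg.2 (hE_ge t ht))
  have hg_anti : AntitoneOn g (Set.Ici 0) := by
    intro x hx y hy hxy
    exact mul_le_mul (ha_mono hx hy hxy) (sub_le_sub_right (hE_mono hx hy hxy) m)
      (sub_nonneg.2 (hE_ge y hy)) (ha_nonneg x hx)
  have hgIoi : IntegrableOn g (Set.Ioi 0) := hsum.mono_set Ioi_subset_Ici_self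
  -- tail integral tends to zero
  have htail : Tendsto (fun t => ∫ s in Set.Ioi t, g s) atTop (nhds 0) := by
    have h1 : Tendsto (fun t => ∫ s in (0:ℝ)..t, g s) atTop
        (nhds (∫ s in Set.Ioi (0:ℝ), g s)) :=
      intervalIntegral_tendsto_integral_Ioi 0 hgIoi tendsto_id
    have h2 : ∀ᶠ t in atTop, (∫ s in Set.Ioi t, g s)
        = (∫ s in Set.Ioi (0:ℝ), g s) - ∫ s in (0:ℝ)..t, g s := by
      filter_upwards [eventually_ge_atTop (0:ℝ)] with t ht
      have hsplit : Set.Ioi (0:ℝ) = Set.Ioc 0 t ∪ Set.Ioi t := (Ioc_union_Ioi_eq_Ioi ht).symm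
      rw [intervalIntegral.integral_of_le ht]
      rw [hsplit, setIntegral_union Ioc_disjoint_Ioi_same measurableSet_Ioi
        (hgIoi.mono_set (by rw [hsplit]; exact subset_union_left))
        (hgIoi.mono_set (by rw [hsplit]; exact subset_union_right))]
      ring
    have := h1.const_sub (∫ s in Set.Ioi (0:ℝ), g s)
    rw [sub_self] at this
    exact Tendsto.congr' (h2.mono fun t ht => ht.symm) this
  have hup : Tendsto (fun t : ℝ => 2 * ∫ s in Set.Ioi (t/2), g s) atTop (nhds 0) := by
    have : Tendsto (fun t : ℝ => t / 2) atTop atTop := by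
      apply Tendsto.atTop_div_const (by norm_num) tendsto_id
    simpa using (htail.comp this).const_mul 2
  -- key bound: for t ≥ 0, t * g t ≤ 2 * ∫ over Ioi (t/2)
  apply tendsto_of_tendsto_of_tendsto_of_le_of_le' tendsto_const_nhds hup
  · filter_upwards [eventually_ge_atTop (0:ℝ)] with t ht
    exact mul_nonneg (mul_nonneg ht (ha_nonneg t ht)) (sub_nonneg.2 (hE_ge t ht))
  · filter_upwards [eventually_ge_atTop (0:ℝ)] with t ht
    have ht2 : (0:ℝ) ≤ t / 2 := by linarith
    have hle : t / 2 ≤ t := by linarith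
    have hint : IntegrableOn g (Set.Ioc (t/2) t) :=
      hsum.mono_set (fun x hx => le_trans ht2 (le_of_lt hx.1))
    have hlow : ∀ s ∈ Set.Ioc (t/2) t, g t ≤ g s := fun s hs =>
      hg_anti (le_trans ht2 hs.1.le) ht hs.2
    have h1 : (t - t/2) * g t ≤ ∫ s in Set.Ioc (t/2) t, g s := by
      have hconst : IntegrableOn (fun _ => g t) (Set.Ioc (t/2) t) :=
        integrableOn_const (by rw [Real.volume_Ioc]; exact ENNReal.ofReal_ne_top)
      have := setIntegral_mono_on hconst hint measurableSet_Ioc hlow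
      simpa [Real.volume_Ioc, ENNReal.toReal_ofReal (sub_nonneg.2 hle), max_eq_left (sub_nonneg.2 hle), mul_comm] using this
    have h2 : (∫ s in Set.Ioc (t/2) t, g s) ≤ ∫ s in Set.Ioi (t/2), g s := by
      apply setIntegral_mono_set (hsum.mono_set (fun x hx => le_trans ht2 hx.le))
      · filter_upwards [ae_restrict_mem measurableSet_Ioi] with x hx
        exact hg_nonneg x (le_trans ht2 hx.le)
      · exact HasSubset.Subset.eventuallyLE Ioc_subset_Ioi_self
    have : t * g t = 2 * ((t - t/2) * g t) := by ring
    rw [show t * a t * (E t - m) = t * g t from by ring, this]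
    linarith [le_trans h1 h2]
end

section
/- Let $a:(0,\infty)\to\mathbb{R}_+$ be continuous with $\int_0^\infty e^{-\int_0^t a(s)\,ds}\,dt=\infty$, and let $p\in C^2([t_0,\infty),\mathbb{R})$ satisfy $\ddot{p}(t)+a(t)\dot{p}(t)\le 0$ for all $t\ge t_0$. Then either $\lim_{t\to\infty}p(t)=-\infty$, or $\dot{p}(t)\ge 0$ for all $t\ge t_0$. -/
open Set Filter MeasureTheory

/-- Differential inequality `p̈ + a ṗ ≤ 0` under `∫₀^∞ e^{-∫₀ᵗ a} dt = ∞`: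
either `p(t) → -∞` or `ṗ ≥ 0` on `[t₀, ∞)`. -/
theorem stmt_9
    (a : ℝ → ℝ) (ha_cont : Continuous a) (ha_nonneg : ∀ t ≥ (0:ℝ), 0 ≤ a t)
    (ha_div : ¬ MeasureTheory.IntegrableOn
      (fun t => Real.exp (-∫ s in (0:ℝ)..t, a s)) (Set.Ici 0))
    (t₀ : ℝ) (ht₀ : 0 ≤ t₀)
    (p : ℝ → ℝ) (hp : ContDiff ℝ 2 p)
    (hineq : ∀ t ≥ t₀, deriv (deriv p) t + a t * deriv p t ≤ 0) :
    Filter.Tendsto p Filter.atTop Filter.atBot ∨ ∀ t ≥ t₀, 0 ≤ deriv p t := by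
  by_cases hq : ∀ t ≥ t₀, 0 ≤ deriv p t
  · exact Or.inr hq
  left
  push_neg at hq
  obtain ⟨t₁, ht₁, hq1⟩ := hq
  set q : ℝ → ℝ := deriv p with hqdef
  have hp2 : ContDiff ℝ 2 p := hp
  have hp' : Differentiable ℝ p ∧ ContDiff ℝ 1 q := by
    have hp2' : ContDiff ℝ ((1:WithTop ℕ∞) + 1) p := by
      rw [show ((1:WithTop ℕ∞) + 1) = 2 from by norm_num]
      exact hp2
    obtain ⟨h1, -, h3⟩ := contDiff_succ_iff_deriv.mp hp2'
    exact ⟨h1, h3⟩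
  have hq_diff : Differentiable ℝ q := hp'.2.differentiable one_ne_zero
  have hq_cont : Continuous q := hq_diff.continuous
  set A : ℝ → ℝ := fun t => ∫ s in (0:ℝ)..t, a s with hAdef
  have hA : ∀ t, HasDerivAt A (a t) t := fun t =>
    (ha_cont.integral_hasStrictDerivAt 0 t).hasDerivAt
  have hA_cont : Continuous A :=
    (Differentiable.continuous (fun t => (hA t).differentiableAt))
  set f : ℝ → ℝ := fun t => Real.exp (-(A t)) with hfdef
  have hf_cont : Continuous f := (hA_cont.neg).rexp
  have hf_pos : ∀ t, 0 < f t := fun t => Real.exp_pos _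
  set g : ℝ → ℝ := fun t => Real.exp (A t) * q t with hgdef
  have hg : ∀ t, HasDerivAt g (Real.exp (A t) * (a t * q t + deriv q t)) t := by
    intro t
    have h1 : HasDerivAt (fun t => Real.exp (A t)) (Real.exp (A t) * a t) t := (hA t).exp
    have h2 : HasDerivAt q (deriv q t) t := (hq_diff t).hasDerivAt
    have : HasDerivAt g _ t := h1.mul h2
    convert this using 1
    ring
  have hg_anti : AntitoneOn g (Ici t₀) := by
    apply antitoneOn_of_deriv_nonpos (convex_Ici t₀)
    · exact (Continuous.mul (hA_cont.rexp) hq_cont).continuousOn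
    · intro x _
      exact ((hg x).differentiableAt).differentiableWithinAt
    · intro x hx
      rw [interior_Ici] at hx
      rw [(hg x).deriv]
      have h0 := hineq x (le_of_lt hx)
      have h3 : a x * q x + deriv q x ≤ 0 := by
        have : deriv q x + a x * q x ≤ 0 := h0
        linarith
      exact mul_nonpos_of_nonneg_of_nonpos (Real.exp_pos _).le h3
  have hgt1_neg : g t₁ < 0 := mul_neg_of_pos_of_neg (Real.exp_pos _) hq1
  have hq_bound : ∀ s, t₁ ≤ s → q s ≤ g t₁ * f s := by
    intro s hs
    have hgs : g s ≤ g t₁ := hg_anti ht₁ (le_trans ht₁ hs) hs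
    have hqs : q s = f s * g s := by
      simp only [hgdef, hfdef]
      rw [← mul_assoc, ← Real.exp_add]
      simp
    rw [hqs]
    calc f s * g s ≤ f s * g t₁ := mul_le_mul_of_nonneg_left hgs (hf_pos s).le
      _ = g t₁ * f s := mul_comm _ _
  set F : ℝ → ℝ := fun t => ∫ s in t₁..t, f s with hFdef
  have hF_mono : Monotone F := by
    intro u v huv
    have hsub : F v - F u = ∫ s in u..v, f s := by
      rw [hFdef]
      simp only
      rw [← intervalIntegral.integral_add_adjacent_intervals
        (hf_cont.intervalIntegrable t₁ u) (hf_cont.intervalIntegrable u v)]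
      ring
    have h4 : 0 ≤ ∫ s in u..v, f s :=
      intervalIntegral.integral_nonneg huv (fun x _ => (hf_pos x).le)
    linarith
  have hF_unbdd : ¬ BddAbove (Set.range F) := by
    rintro ⟨M, hM⟩
    apply ha_div
    have hint_Ioi : IntegrableOn f (Ioi t₁) := by
      apply MeasureTheory.integrableOn_Ioi_of_intervalIntegral_norm_bounded
        (μ := volume) (l := atTop) (b := id) M t₁
      · intro i
        exact hf_cont.integrableOn_Ioc
      · exact tendsto_id
      · filter_upwards [eventually_ge_atTop t₁] with i hi
        have heq : (∫ x in t₁..(id i), ‖f x‖) = F i := by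
          rw [hFdef]
          simp only [id]
          apply intervalIntegral.integral_congr
          intro x _
          exact Real.norm_of_nonneg (hf_pos x).le
        rw [heq]
        exact hM ⟨i, rfl⟩
    have hint_Icc : IntegrableOn f (Icc 0 t₁) := hf_cont.integrableOn_Icc
    have hunion : IntegrableOn f (Icc 0 t₁ ∪ Ioi t₁) := hint_Icc.union hint_Ioi
    have hsub : Ici (0:ℝ) ⊆ Icc 0 t₁ ∪ Ioi t₁ := by
      intro x hx
      rcases le_or_gt x t₁ with h | h
      · exact Or.inl ⟨hx, h⟩
      · exact Or.inr h
    exact hunion.mono_set hsub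
  have hF_top : Tendsto F atTop atTop := tendsto_atTop_atTop_of_monotone' hF_mono hF_unbdd
  have hgf_bot : Tendsto (fun t => g t₁ * F t) atTop atBot :=
    (tendsto_const_mul_atBot_of_neg hgt1_neg).mpr hF_top
  have hbd : Tendsto (fun t => p t₁ + g t₁ * F t) atTop atBot :=
    tendsto_atBot_add_const_left _ _ hgf_bot
  apply tendsto_atBot_mono' atTop _ hbd
  filter_upwards [eventually_ge_atTop t₁] with t ht
  have hftc : (∫ s in t₁..t, q s) = p t - p t₁ := by
    apply intervalIntegral.integral_deriv_eq_sub
    · intro x _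
      exact hp'.1 x
    · exact hq_cont.intervalIntegrable t₁ t
  have hmono : (∫ s in t₁..t, q s) ≤ ∫ s in t₁..t, g t₁ * f s := by
    apply intervalIntegral.integral_mono_on ht
      (hq_cont.intervalIntegrable t₁ t)
      ((continuous_const.mul hf_cont).intervalIntegrable t₁ t)
    intro x hx
    exact hq_bound x hx.1
  have hconst : (∫ s in t₁..t, g t₁ * f s) = g t₁ * F t := by
    rw [hFdef]
    exact intervalIntegral.integral_const_mul _ _
  linarith
end

section
/- Let $a:\mathbb{R}_+\to\mathbb{R}_+$ be continuous with $\int_0^\infty e^{-\int_0^t a(s)\,ds}\,dt=\infty$, and let $p\in C^2([t_0,\infty),\mathbb{R})$ satisfy $\ddot{p}(t)+a(t)\dot{p}(t)=0$ for all $t\ge t_0$. Then either $\lim_{t\to\infty}|p(t)|=\infty$, or $p(t)=p(t_0)$ for all $t\ge t_0$. -/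
open Set Filter MeasureTheory

private lemma const_of_deriv_zero (f : ℝ → ℝ) (hf : Differentiable ℝ f) (t₀ : ℝ)
    (h : ∀ t ≥ t₀, deriv f t = 0) : ∀ t ≥ t₀, f t = f t₀ := by
  intro t ht
  refine constant_of_has_deriv_right_zero (f := f) (a := t₀) (b := t)
    hf.continuous.continuousOn (fun x hx => ?_) t (right_mem_Icc.2 ht)
  have hd := (hf x).hasDerivAt
  rw [h x hx.1] at hd
  exact hd.hasDerivWithinAt

/-- Linear equation `p̈ + a ṗ = 0` under `∫₀^∞ e^{-∫₀ᵗ a} dt = ∞`: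
either `|p(t)| → ∞` or `p` is constant on `[t₀, ∞)`. -/
theorem stmt_10
    (a : ℝ → ℝ) (ha_cont : Continuous a) (ha_nonneg : ∀ t ≥ (0:ℝ), 0 ≤ a t)
    (ha_div : ¬ MeasureTheory.IntegrableOn
      (fun t => Real.exp (-∫ s in (0:ℝ)..t, a s)) (Set.Ici 0))
    (t₀ : ℝ) (ht₀ : 0 ≤ t₀)
    (p : ℝ → ℝ) (hp : ContDiff ℝ 2 p)
    (heq : ∀ t ≥ t₀, deriv (deriv p) t + a t * deriv p t = 0) :
    Filter.Tendsto (fun t => |p t|) Filter.atTop Filter.atTop ∨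
    ∀ t ≥ t₀, p t = p t₀ := by
  have hp' : ContDiff ℝ ((1:WithTop ℕ∞)+1) p := by
    have : ((1:WithTop ℕ∞)+1) = 2 := by norm_num
    rw [this]; exact hp
  obtain ⟨hp_diff, -, hdp⟩ := contDiff_succ_iff_deriv.mp hp'
  have hv_diff : Differentiable ℝ (deriv p) := hdp.differentiable one_ne_zero
  set A : ℝ → ℝ := fun t => ∫ s in t₀..t, a s with hA_def
  have hA : ∀ t, HasDerivAt A (a t) t := fun t =>
    (ha_cont.integral_hasStrictDerivAt t₀ t).hasDerivAt
  -- v t = v t₀ * exp (-A t) on [t₀, ∞)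
  set g : ℝ → ℝ := fun t => deriv p t * Real.exp (A t) with hg_def
  have hg_deriv : ∀ t, HasDerivAt g
      (deriv (deriv p) t * Real.exp (A t) + deriv p t * (a t * Real.exp (A t))) t :=
    fun t => (hv_diff t).hasDerivAt.mul (by simpa [mul_comm] using (hA t).exp)
  have hg_diff : Differentiable ℝ g := fun t => (hg_deriv t).differentiableAt
  have hg_const : ∀ t ≥ t₀, g t = g t₀ := by
    refine const_of_deriv_zero g hg_diff t₀ (fun t ht => ?_)
    rw [(hg_deriv t).deriv]
    have : deriv (deriv p) t * Real.exp (A t) + deriv p t * (a t * Real.exp (A t))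
        = (deriv (deriv p) t + a t * deriv p t) * Real.exp (A t) := by ring
    rw [this, heq t ht, zero_mul]
  have hA0 : A t₀ = 0 := intervalIntegral.integral_same
  have hv : ∀ t ≥ t₀, deriv p t = deriv p t₀ * Real.exp (-A t) := by
    intro t ht
    have h1 := hg_const t ht
    simp only [hg_def, hA0, Real.exp_zero, mul_one] at h1
    rw [Real.exp_neg]
    field_simp at h1 ⊢
    linarith [h1]
  by_cases hc : deriv p t₀ = 0
  · right
    refine const_of_deriv_zero p hp_diff t₀ (fun t ht => ?_)
    rw [hv t ht, hc, zero_mul]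
  · left
    set F : ℝ → ℝ := fun t => ∫ s in t₀..t, Real.exp (-A s) with hF_def
    have hA_cont : Continuous A := continuous_iff_continuousAt.mpr
      fun t => (hA t).continuousAt
    have hE_cont : Continuous fun s => Real.exp (-A s) :=
      (hA_cont.neg).rexp
    have hF : ∀ t, HasDerivAt F (Real.exp (-A t)) t := fun t =>
      (hE_cont.integral_hasStrictDerivAt t₀ t).hasDerivAt
    -- p t = p t₀ + c * F t on [t₀, ∞)
    set c := deriv p t₀ with hc_def
    have hrep : ∀ t ≥ t₀, p t = p t₀ + c * F t := by
      have hdiff : Differentiable ℝ (fun t => p t - c * F t) :=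
        hp_diff.sub ((differentiable_const c).mul fun t => (hF t).differentiableAt)
      have hkey := const_of_deriv_zero _ hdiff t₀ (fun t ht => by
        have : HasDerivAt (fun t => p t - c * F t)
            (deriv p t - c * Real.exp (-A t)) t :=
          (hp_diff t).hasDerivAt.sub ((hF t).const_mul c)
        rw [this.deriv, hv t ht]; ring)
      intro t ht
      have := hkey t ht
      simp only [hF_def, intervalIntegral.integral_same, mul_zero, sub_zero] at this
      linarith
    -- F tends to ∞
    have hF_mono : Monotone F := by
      intro x y hxy
      have : F y - F x = ∫ s in x..y, Real.exp (-A s) :=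
        intervalIntegral.integral_interval_sub_left
          (hE_cont.intervalIntegrable _ _) (hE_cont.intervalIntegrable _ _)
      have hnn : 0 ≤ ∫ s in x..y, Real.exp (-A s) :=
        intervalIntegral.integral_nonneg hxy (fun u _ => (Real.exp_pos _).le)
      linarith
    have hF_top : Tendsto F atTop atTop := by
      rcases tendsto_of_monotone hF_mono with h | ⟨l, hl⟩
      · exact h
      · exfalso
        apply ha_div
        set B : ℝ → ℝ := fun t => ∫ s in (0:ℝ)..t, a s with hB_def
        have hB_cont : Continuous B := continuous_iff_continuousAt.mpr
          fun t => ((ha_cont.integral_hasStrictDerivAt 0 t).hasDerivAt).continuousAt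
        have hAB : ∀ s, A s = B s - B t₀ := by
          intro s
          have := intervalIntegral.integral_interval_sub_left
            (ha_cont.intervalIntegrable (μ := volume) (0:ℝ) s) (ha_cont.intervalIntegrable (0:ℝ) t₀)
          simpa [hA_def, hB_def] using this.symm
        have hf0_cont : Continuous fun t => Real.exp (-B t) :=
          (hB_cont.neg).rexp
        have hEB : ∀ s, Real.exp (-A s) = Real.exp (B t₀) * Real.exp (-B s) := by
          intro s
          rw [hAB s, ← Real.exp_add]; ring_nf
        have hIoi : IntegrableOn (fun t => Real.exp (-B t)) (Ioi t₀) := by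
          refine integrableOn_Ioi_of_intervalIntegral_norm_tendsto (μ := volume)
            (Real.exp (-B t₀) * l) t₀ (fun i => hf0_cont.integrableOn_Ioc)
            (tendsto_id (α := ℝ)) ?_
          have : ∀ i : ℝ, (∫ x in t₀..i, ‖Real.exp (-B x)‖) = Real.exp (-B t₀) * F i := by
            intro i
            rw [hF_def]
            rw [← intervalIntegral.integral_const_mul]
            congr 1 with x
            rw [Real.norm_eq_abs, abs_of_pos (Real.exp_pos _), hEB x, ← mul_assoc,
              ← Real.exp_add]
            simp
          simp only [this]
          exact hl.const_mul _
        have hIcc : IntegrableOn (fun t => Real.exp (-B t)) (Icc 0 t₀) :=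
          hf0_cont.integrableOn_Icc
        have : IntegrableOn (fun t => Real.exp (-B t)) (Icc 0 t₀ ∪ Ioi t₀) :=
          hIcc.union hIoi
        exact this.mono_set (fun x hx => by
          rcases le_or_gt x t₀ with h | h
          · exact Or.inl ⟨hx, h⟩
          · exact Or.inr h)
    -- conclude
    rcases lt_or_gt_of_ne hc with hneg | hpos
    · have hp_bot : Tendsto p atTop atBot := by
        have h1 : Tendsto (fun t => p t₀ + c * F t) atTop atBot :=
          tendsto_atBot_add_const_left _ _ ((hF_top.const_mul_atTop_of_neg hneg))
        refine h1.congr' ?_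
        filter_upwards [eventually_ge_atTop t₀] with t ht
        exact (hrep t ht).symm
      exact tendsto_abs_atBot_atTop.comp hp_bot
    · have hp_top : Tendsto p atTop atTop := by
        have h1 : Tendsto (fun t => p t₀ + c * F t) atTop atTop :=
          tendsto_atTop_add_const_left _ _ (hF_top.const_mul_atTop hpos)
        refine h1.congr' ?_
        filter_upwards [eventually_ge_atTop t₀] with t ht
        exact (hrep t ht).symm
      exact tendsto_abs_atTop_atTop.comp hp_top
end

section
/- Let $S\subset H$ be a nonempty closed convex subset of a Hilbert space and $G:H\to\mathbb{R}$ a convex $C^1$ function with $S=\operatorname{argmin} G$. Let $\bar{x}\in\partial S$ and suppose $d:=\lim_{x\to\bar{x},\,x\notin S}\nabla G(x)/|\nabla G(x)|$ exists (with $|d|=1$). Then the normal cone of $S$ at $\bar{x}$ satisfies $N_S(\bar{x})=\mathbb{R}_+\,d$. -/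
open Set Filter

open scoped RealInnerProductSpace

/-- Subgradient inequality for a convex `C¹` function. -/
lemma grad_ineq_aux
    {H : Type*} [NormedAddCommGroup H] [InnerProductSpace ℝ H] [CompleteSpace H]
    (G : H → ℝ) (hGconv : ConvexOn ℝ Set.univ G)
    (G' : H → H) (hG : ∀ y, HasGradientAt G (G' y) y)
    (x y : H) : G x + ⟪G' x, y - x⟫ ≤ G y := by
  set φ : ℝ → ℝ := fun t => G (x + t • (y - x)) with hφ
  have hφconv : ConvexOn ℝ Set.univ φ := by
    have := hGconv.comp_affineMap
      (AffineMap.lineMap x y : ℝ →ᵃ[ℝ] H)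
    have he : (AffineMap.lineMap x y : ℝ →ᵃ[ℝ] H) ⁻¹' Set.univ = Set.univ := by
      simp
    rw [he] at this
    have hfun : φ = G ∘ (AffineMap.lineMap x y : ℝ →ᵃ[ℝ] H) := by
      funext t
      simp [φ, AffineMap.lineMap_apply, add_comm]
    rw [hfun]; exact this
  have hline : HasDerivAt (fun t : ℝ => x + t • (y - x)) (y - x) 0 := by
    have h1 : HasDerivAt (fun t : ℝ => t • (y - x)) ((1 : ℝ) • (y - x)) 0 :=
      (hasDerivAt_id (0 : ℝ)).smul_const (y - x)
    simpa using h1.const_add x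
  have hφderiv : HasDerivAt φ ⟪G' x, y - x⟫ 0 := by
    have hF : HasFDerivAt G (InnerProductSpace.toDual ℝ H (G' x))
        ((fun t : ℝ => x + t • (y - x)) 0) := by
      simpa using (hG x).hasFDerivAt
    have := hF.comp_hasDerivAt 0 hline
    simpa [φ, InnerProductSpace.toDual_apply_apply, Function.comp_def] using this
  have hslope := hφconv.le_slope_of_hasDerivAt (Set.mem_univ (0:ℝ)) (Set.mem_univ (1:ℝ))
    one_pos hφderiv
  have : slope φ 0 1 = G y - G x := by
    simp [slope, φ]
  rw [this] at hslope
  linarith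

/-- If the normalized gradient of a convex `C¹` function has a limit `d` at a boundary
point `x̄` of `S = argmin G` from outside `S`, then the normal cone of `S` at `x̄` is the
half-line `ℝ₊ d`. -/
theorem stmt_12
    {H : Type*} [NormedAddCommGroup H] [InnerProductSpace ℝ H] [CompleteSpace H]
    (G : H → ℝ) (hGconv : ConvexOn ℝ Set.univ G)
    (G' : H → H) (hG : ∀ y, HasGradientAt G (G' y) y)
    (S : Set H) (hS : S = {y | ∀ z, G y ≤ G z}) (hSne : S.Nonempty)
    (xbar : H) (hxbar : xbar ∈ frontier S)
    (d : H) (hd : ‖d‖ = 1)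
    (hlim : Filter.Tendsto (fun y => ‖G' y‖⁻¹ • G' y) (nhdsWithin xbar Sᶜ) (nhds d)) :
    {ξ : H | ∀ y ∈ S, ⟪ξ, y - xbar⟫ ≤ 0} = {ξ : H | ∃ r : ℝ, 0 ≤ r ∧ ξ = r • d} := by
  have hineq := grad_ineq_aux G hGconv G' hG
  have hGcont : Continuous G := by
    apply continuous_iff_continuousAt.mpr
    intro x
    exact (hG x).hasFDerivAt.differentiableAt.continuousAt
  have hSclosed : IsClosed S := by
    rw [hS]
    have : {y : H | ∀ z, G y ≤ G z} = ⋂ z, {y | G y ≤ G z} := by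
      ext y; simp
    rw [this]
    exact isClosed_iInter fun z => isClosed_le hGcont continuous_const
  have hxS : xbar ∈ S := hSclosed.frontier_subset hxbar
  have hxmin : ∀ z, G xbar ≤ G z := by rw [hS] at hxS; exact hxS
  -- the filter from outside is nontrivial
  have hNe : (nhdsWithin xbar Sᶜ).NeBot := by
    apply mem_closure_iff_nhdsWithin_neBot.mp
    have : xbar ∈ frontier Sᶜ := by rwa [frontier_compl]
    exact this.1
  -- strict inequality at points outside S
  have hGx_pos : ∀ x ∉ S, G xbar < G x := by
    intro x hx
    rw [hS] at hx
    simp only [Set.mem_setOf_eq, not_forall, not_le] at hx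
    obtain ⟨z, hz⟩ := hx
    exact lt_of_le_of_lt (hxmin z) hz
  -- easy direction: d is in the normal cone
  have hdN : ∀ y ∈ S, ⟪d, y - xbar⟫ ≤ 0 := by
    intro y hy
    have hGy : ∀ z, G y ≤ G z := by rw [hS] at hy; exact hy
    have htend : Filter.Tendsto (fun x => ⟪‖G' x‖⁻¹ • G' x, y - x⟫)
        (nhdsWithin xbar Sᶜ) (nhds ⟪d, y - xbar⟫) := by
      exact hlim.inner ((tendsto_const_nhds.sub tendsto_id).mono_left nhdsWithin_le_nhds)
    apply le_of_tendsto htend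
    filter_upwards [self_mem_nhdsWithin] with x hx
    have h1 : ⟪G' x, y - x⟫ ≤ 0 := by
      have := hineq x y
      have := hGy x
      linarith
    rw [real_inner_smul_left]
    exact mul_nonpos_of_nonneg_of_nonpos (inv_nonneg.mpr (norm_nonneg _)) h1
  -- key step: directions strictly on the negative side of d eventually enter S
  have hkey : ∀ w : H, ⟪d, w⟫ < 0 → ∃ ε : ℝ, 0 < ε ∧ xbar + ε • w ∈ S := by
    intro w hw
    by_contra hcon
    push_neg at hcon
    set z : ℕ → H := fun n => xbar + (1 / (n + 1 : ℝ)) • w with hz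
    have hzn : ∀ n, z n ∉ S := by
      intro n
      exact hcon _ (by positivity)
    have hzt : Filter.Tendsto z atTop (nhdsWithin xbar Sᶜ) := by
      rw [tendsto_nhdsWithin_iff]
      constructor
      · have h0 : Filter.Tendsto (fun n : ℕ => (1 / (n + 1 : ℝ))) atTop (nhds 0) :=
          tendsto_one_div_add_atTop_nhds_zero_nat
        have := (h0.smul_const w).const_add xbar
        show Filter.Tendsto (fun n : ℕ => xbar + (1 / (n + 1 : ℝ)) • w) atTop (nhds xbar)
        simpa using this
      · exact Filter.Eventually.of_forall fun n => hzn n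
    have hpos : ∀ n, 0 ≤ ⟪‖G' (z n)‖⁻¹ • G' (z n), w⟫ := by
      intro n
      have h1 : ⟪G' (z n), w⟫ > 0 := by
        have h2 := hineq (z n) xbar
        have h3 : G xbar < G (z n) := hGx_pos _ (hzn n)
        have h4 : ⟪G' (z n), xbar - z n⟫ < 0 := by linarith
        have h5 : xbar - z n = -((1 / (n + 1 : ℝ)) • w) := by
          rw [hz]; simp
        rw [h5, inner_neg_right, neg_lt, neg_zero, real_inner_smul_right] at h4
        have h6 : (0:ℝ) < 1 / (n + 1 : ℝ) := by positivity
        nlinarith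
      rw [real_inner_smul_left]
      positivity
    have htend : Filter.Tendsto (fun n => ⟪‖G' (z n)‖⁻¹ • G' (z n), w⟫)
        atTop (nhds ⟪d, w⟫) := by
      exact ((hlim.comp hzt).inner tendsto_const_nhds)
    have : 0 ≤ ⟪d, w⟫ := ge_of_tendsto htend (Filter.Eventually.of_forall hpos)
    linarith
  -- from the key step: normal vectors pair nonpositively with all w with ⟪d,w⟫ ≤ 0
  ext ξ
  simp only [Set.mem_setOf_eq]
  constructor
  · intro hξ
    have hstep : ∀ w : H, ⟪d, w⟫ < 0 → ⟪ξ, w⟫ ≤ 0 := by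
      intro w hw
      obtain ⟨ε, hε, hmem⟩ := hkey w hw
      have := hξ _ hmem
      rw [add_sub_cancel_left, real_inner_smul_right] at this
      nlinarith
    have hstep' : ∀ w : H, ⟪d, w⟫ ≤ 0 → ⟪ξ, w⟫ ≤ 0 := by
      intro w hw
      by_cases hq : ⟪ξ, d⟫ ≤ 0
      · have h1 : ⟪d, w - (1:ℝ) • d⟫ < 0 := by
          rw [inner_sub_right, real_inner_smul_right, real_inner_self_eq_norm_sq, hd]
          norm_num
          linarith
        have h2 := hstep _ h1
        rw [inner_sub_right, real_inner_smul_right] at h2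
        linarith
      · push_neg at hq
        apply le_of_forall_pos_le_add
        intro ε hε
        have hδ : (0:ℝ) < ε / ⟪ξ, d⟫ := by positivity
        have h1 : ⟪d, w - (ε / ⟪ξ, d⟫) • d⟫ < 0 := by
          rw [inner_sub_right, real_inner_smul_right, real_inner_self_eq_norm_sq, hd]
          norm_num
          nlinarith
        have h2 := hstep _ h1
        rw [inner_sub_right, real_inner_smul_right] at h2
        have : (ε / ⟪ξ, d⟫) * ⟪ξ, d⟫ = ε := by
          field_simp
        linarith
    set r : ℝ := ⟪ξ, d⟫ with hr
    have hr0 : 0 ≤ r := by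
      have := hstep' (-d) (by
        rw [inner_neg_right, real_inner_self_eq_norm_sq, hd]; norm_num)
      rw [inner_neg_right] at this
      linarith
    refine ⟨r, hr0, ?_⟩
    have hw0 : ⟪d, ξ - r • d⟫ = 0 := by
      rw [inner_sub_right, real_inner_smul_right, real_inner_self_eq_norm_sq, hd,
        real_inner_comm]
      rw [hr]; ring
    have h2 := hstep' _ (le_of_eq hw0)
    have hexp : ‖ξ - r • d‖ ^ 2 = ⟪ξ, ξ - r • d⟫ - r * ⟪d, ξ - r • d⟫ := by
      rw [← real_inner_self_eq_norm_sq, inner_sub_left, real_inner_smul_left]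
    have hnorm : ‖ξ - r • d‖ ^ 2 ≤ 0 := by
      rw [hexp, hw0]; linarith
    have h0 : ‖ξ - r • d‖ = 0 := by
      nlinarith [norm_nonneg (ξ - r • d)]
    exact (sub_eq_zero.mp (norm_eq_zero.mp h0))
  · rintro ⟨r, hr, rfl⟩ y hy
    rw [real_inner_smul_left]
    exact mul_nonpos_of_nonneg_of_nonpos hr (hdN y hy)
end

section
/- Let $a:\mathbb{R}_+\to\mathbb{R}_+$ be non-increasing with $a(t)\ge a_0>0$ for all $t$, and let $x$ be a bounded global solution of $\ddot{x}+a\dot{x}+g(x)=0$ in $\mathbb{R}^n$ with $g=\nabla G$ Lipschitz on bounded sets and $\ddot{x}$ uniformly bounded. If moreover $\int_0^\infty a(t)|\dot{x}(t)|^2\,dt<\infty$, then $\dot{x}(t)\to 0$ as $t\to\infty$. If additionally the zero set of $g$ is finite, then $x(t)$ converges to one of the zeros of $g$ as $t\to\infty$. -/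
open Set Filter MeasureTheory

lemma barbalat (f : ℝ → ℝ) (hcont : Continuous f) (hnn : ∀ t ≥ (0:ℝ), 0 ≤ f t)
    (L : ℝ) (hL : 0 ≤ L) (hlip : ∀ s ≥ (0:ℝ), ∀ t ≥ (0:ℝ), |f s - f t| ≤ L * |s - t|)
    (hint : IntegrableOn f (Ioi 0)) : Tendsto f atTop (nhds 0) := by
  rw [NormedAddCommGroup.tendsto_nhds_zero]
  intro ε hε
  by_contra hcon
  -- frequently ε ≤ ‖f t‖
  rw [Filter.not_eventually] at hcon
  set δ : ℝ := ε / (2 * (L + 1)) with hδdef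
  have hδpos : 0 < δ := by positivity
  have hFt : Tendsto (fun T => ∫ s in (0:ℝ)..T, f s) atTop (nhds (∫ s in Ioi (0:ℝ), f s)) :=
    intervalIntegral_tendsto_integral_Ioi 0 hint tendsto_id
  have hFt2 : Tendsto (fun T => ∫ s in (0:ℝ)..(T + δ), f s) atTop (nhds (∫ s in Ioi (0:ℝ), f s)) :=
    intervalIntegral_tendsto_integral_Ioi 0 hint (tendsto_atTop_add_const_right _ δ tendsto_id)
  have hdiff : Tendsto (fun T => (∫ s in (0:ℝ)..(T + δ), f s) - ∫ s in (0:ℝ)..T, f s)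
      atTop (nhds 0) := by
    simpa using hFt2.sub hFt
  have hev : ∀ᶠ T in atTop, ((∫ s in (0:ℝ)..(T + δ), f s) - ∫ s in (0:ℝ)..T, f s) < δ * (ε/2) := by
    have := hdiff.eventually (eventually_lt_nhds (show (0:ℝ) < δ * (ε/2) by positivity))
    simpa using this
  have hfreq := hcon.and_eventually (hev.and (eventually_ge_atTop (0:ℝ)))
  obtain ⟨t, hft, hsmall, ht0⟩ := hfreq.exists
  have hftε : ε ≤ f t := by
    have := not_lt.mp hft
    rwa [Real.norm_eq_abs, abs_of_nonneg (hnn t ht0)] at this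
  -- lower bound the integral on [t, t+δ]
  have hlow : ∀ s ∈ Icc t (t + δ), ε / 2 ≤ f s := by
    intro s hs
    have hs0 : (0:ℝ) ≤ s := le_trans ht0 hs.1
    have h1 : |f s - f t| ≤ L * |s - t| := hlip s hs0 t ht0
    have h2 : |s - t| ≤ δ := by
      rw [abs_of_nonneg (by linarith [hs.1])]; linarith [hs.2]
    have h3 : L * |s - t| ≤ L * δ := by nlinarith [abs_nonneg (s - t)]
    have h4 : L * δ ≤ ε / 2 := by
      rw [hδdef, ← mul_div_assoc, div_le_iff₀ (by positivity)]
      nlinarith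
    have := abs_le.mp (h1.trans (h3.trans h4))
    linarith [this.1]
  have hint1 : IntervalIntegrable f volume t (t + δ) := hcont.intervalIntegrable _ _
  have hmono : δ * (ε/2) ≤ ∫ s in t..(t + δ), f s := by
    have := intervalIntegral.integral_mono_on (by linarith : t ≤ t + δ)
      (intervalIntegrable_const (c := ε/2)) hint1 hlow
    rw [intervalIntegral.integral_const] at this
    simpa [smul_eq_mul] using this
  have hadd : (∫ s in (0:ℝ)..t, f s) + ∫ s in t..(t+δ), f s = ∫ s in (0:ℝ)..(t+δ), f s :=
    intervalIntegral.integral_add_adjacent_intervals (hcont.intervalIntegrable _ _)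
      (hcont.intervalIntegrable _ _)
  have : (∫ s in (0:ℝ)..(t + δ), f s) - ∫ s in (0:ℝ)..t, f s = ∫ s in t..(t+δ), f s := by
    linarith
  rw [this] at hsmall
  linarith

lemma finite_limit {E : Type*} [MetricSpace E] (Z : Set E) (hZ : Z.Finite) (x : ℝ → E)
    (hx : Continuous x)
    (hev : ∀ ε > (0:ℝ), ∀ᶠ t in atTop, ∃ z ∈ Z, dist (x t) z < ε) :
    ∃ z ∈ Z, Tendsto x atTop (nhds z) := by
  classical
  -- a positive ε₀ with pairwise distances ≥ 3 ε₀
  obtain ⟨ε₀, hε₀, hsep⟩ : ∃ ε₀ > (0:ℝ), ∀ z ∈ Z, ∀ w ∈ Z, z ≠ w → 3 * ε₀ ≤ dist z w := by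
    set P := (hZ.toFinset ×ˢ hZ.toFinset).filter (fun p => p.1 ≠ p.2) with hP
    set D := P.image (fun p => dist p.1 p.2) with hD
    by_cases hDne : D.Nonempty
    · refine ⟨D.min' hDne / 3, ?_, ?_⟩
      · have : ∀ d ∈ D, 0 < d := by
          intro d hd
          rw [hD] at hd
          obtain ⟨p, hp, rfl⟩ := Finset.mem_image.mp hd
          rw [hP, Finset.mem_filter] at hp
          exact dist_pos.mpr hp.2
        have := this _ (D.min'_mem hDne)
        linarith
      · intro z hz w hw hzw
        have hmem : dist z w ∈ D := by
          rw [hD]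
          exact Finset.mem_image.mpr ⟨(z, w), by
            rw [hP, Finset.mem_filter, Finset.mem_product]
            exact ⟨⟨hZ.mem_toFinset.mpr hz, hZ.mem_toFinset.mpr hw⟩, hzw⟩, rfl⟩
        have := D.min'_le _ hmem
        linarith
    · refine ⟨1, one_pos, ?_⟩
      intro z hz w hw hzw
      exfalso
      apply hDne
      refine ⟨dist z w, Finset.mem_image.mpr ⟨(z, w), ?_, rfl⟩⟩
      rw [hP, Finset.mem_filter, Finset.mem_product]
      exact ⟨⟨hZ.mem_toFinset.mpr hz, hZ.mem_toFinset.mpr hw⟩, hzw⟩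
  obtain ⟨T, hT⟩ := (eventually_atTop).mp (hev ε₀ hε₀)
  obtain ⟨z₀, hz₀Z, hz₀⟩ := hT T le_rfl
  have hstay : ∀ t ≥ T, dist (x t) z₀ < ε₀ := by
    intro t ht
    by_contra hcon
    push_neg at hcon
    -- then dist (x t) z₀ ≥ 2 ε₀
    obtain ⟨z, hzZ, hz⟩ := hT t ht
    have hzne : z ≠ z₀ := by
      rintro rfl; linarith
    have h2 : 2 * ε₀ ≤ dist (x t) z₀ := by
      have := hsep z hzZ z₀ hz₀Z hzne
      have htr := dist_triangle z (x t) z₀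
      rw [dist_comm z (x t)] at htr
      linarith
    -- IVT
    have hcontf : ContinuousOn (fun s => dist (x s) z₀) (Icc T t) :=
      ((hx.dist continuous_const)).continuousOn
    have hIcc : (3/2 * ε₀) ∈ Icc (dist (x T) z₀) (dist (x t) z₀) := by
      constructor <;> [linarith; linarith]
    obtain ⟨s, hsmem, hs⟩ := intermediate_value_Icc ht hcontf hIcc
    have hs : dist (x s) z₀ = 3/2 * ε₀ := hs
    obtain ⟨z', hz'Z, hz'⟩ := hT s hsmem.1
    by_cases hz'e : z' = z₀
    · rw [hz'e] at hz'; rw [hs] at hz'; linarith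
    · have := hsep z' hz'Z z₀ hz₀Z hz'e
      have htr := dist_triangle z' (x s) z₀
      rw [dist_comm z' (x s)] at htr
      rw [hs] at htr
      linarith
  refine ⟨z₀, hz₀Z, Metric.tendsto_atTop.mpr ?_⟩
  intro ε hε
  obtain ⟨T', hT'⟩ := (eventually_atTop).mp (hev (min ε ε₀) (lt_min hε hε₀))
  refine ⟨max T T', fun t ht => ?_⟩
  obtain ⟨z, hzZ, hz⟩ := hT' t (le_trans (le_max_right _ _) ht)
  have hst := hstay t (le_trans (le_max_left _ _) ht)
  by_cases hze : z = z₀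
  · rw [hze] at hz; exact lt_of_lt_of_le hz (min_le_left _ _)
  · exfalso
    have := hsep z hzZ z₀ hz₀Z hze
    have htr := dist_triangle z (x t) z₀
    rw [dist_comm z (x t)] at htr
    have : dist (x t) z < ε₀ := lt_of_lt_of_le hz (min_le_right _ _)
    linarith [hsep z hzZ z₀ hz₀Z hze]


set_option maxHeartbeats 2000000 in
/-- If the damping is bounded below by `a₀ > 0`, then `ẋ(t) → 0`, and if `g` has finitely
many zeros, `x(t)` converges to one of them. -/
theorem stmt_15
    (n : ℕ) (a : ℝ → ℝ) (ha_mono : AntitoneOn a (Set.Ici 0))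
    (a₀ : ℝ) (ha₀ : 0 < a₀) (ha_low : ∀ t ≥ (0:ℝ), a₀ ≤ a t)
    (G : EuclideanSpace ℝ (Fin n) → ℝ)
    (g : EuclideanSpace ℝ (Fin n) → EuclideanSpace ℝ (Fin n))
    (hG : ∀ y, HasGradientAt G (g y) y)
    (hg_lip : ∀ s : Set (EuclideanSpace ℝ (Fin n)),
      Bornology.IsBounded s → ∃ K : NNReal, LipschitzOnWith K g s)
    (x : ℝ → EuclideanSpace ℝ (Fin n)) (hx : ContDiff ℝ 2 x)
    (hode : ∀ t ≥ (0:ℝ), deriv (deriv x) t + a t • deriv x t + g (x t) = 0)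
    (hx_bdd : ∃ C, ∀ t ≥ (0:ℝ), ‖x t‖ ≤ C)
    (hacc_bdd : ∃ M, ∀ t ≥ (0:ℝ), ‖deriv (deriv x) t‖ ≤ M)
    (hdiss : MeasureTheory.IntegrableOn (fun t => a t * ‖deriv x t‖^2) (Set.Ici 0)) :
    Filter.Tendsto (deriv x) Filter.atTop (nhds 0) ∧
    ((g ⁻¹' {0}).Finite →
      ∃ xstar, g xstar = 0 ∧ Filter.Tendsto x Filter.atTop (nhds xstar)) := by
  obtain ⟨C, hC⟩ := hx_bdd
  obtain ⟨M, hM⟩ := hacc_bdd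
  set v := deriv x with hv
  set w := deriv (deriv x) with hw
  -- basic smoothness facts
  have hbasic : Differentiable ℝ x ∧ Differentiable ℝ v ∧ Continuous w := by
    have h2 : ContDiff ℝ ((1:ℕ) + 1) x := by norm_num at hx ⊢; exact hx
    rw [contDiff_succ_iff_deriv] at h2
    obtain ⟨hd, -, h1⟩ := h2
    exact ⟨hd, h1.differentiable (by norm_num), h1.continuous_deriv le_rfl⟩
  obtain ⟨hxdiff, hvdiff, hwcont⟩ := hbasic
  have hxcont : Continuous x := hxdiff.continuous
  have hvcont : Continuous v := hvdiff.continuous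
  have hxD : ∀ t, HasDerivAt x (v t) t := fun t => (hxdiff t).hasDerivAt
  have hvD : ∀ t, HasDerivAt v (w t) t := fun t => (hvdiff t).hasDerivAt
  have hC0 : (0:ℝ) ≤ C := le_trans (norm_nonneg _) (hC 0 le_rfl)
  have hM0 : (0:ℝ) ≤ M := le_trans (norm_nonneg _) (hM 0 le_rfl)
  -- velocity bound
  have hMv : ∀ t ≥ (0:ℝ), ‖v t‖ ≤ 2 * C + M := by
    intro t ht
    have hle : t ≤ t + 1 := by linarith
    have hFTC : ∫ s in t..(t+1), v s = x (t+1) - x t :=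
      intervalIntegral.integral_eq_sub_of_hasDerivAt (fun s _ => hxD s)
        (hvcont.intervalIntegrable _ _)
    have hsub : ∫ s in t..(t+1), (v s - v t) = (x (t+1) - x t) - v t := by
      rw [intervalIntegral.integral_sub (hvcont.intervalIntegrable _ _)
        intervalIntegrable_const, hFTC, intervalIntegral.integral_const]
      simp
    have hnorm : ‖∫ s in t..(t+1), (v s - v t)‖ ≤ M * |t + 1 - t| := by
      apply intervalIntegral.norm_integral_le_of_norm_le_const
      intro s hs
      rw [Set.uIoc_of_le hle] at hs
      have hmv : ‖v s - v t‖ ≤ M * ‖s - t‖ :=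
        Convex.norm_image_sub_le_of_norm_hasDerivWithin_le
          (fun u _ => (hvD u).hasDerivWithinAt)
          (fun u hu => hM u (le_trans ht hu.1)) (convex_Icc t (t+1))
          (left_mem_Icc.mpr hle) ⟨hs.1.le, hs.2⟩
      have h1 : ‖s - t‖ ≤ 1 := by
        rw [Real.norm_eq_abs, abs_of_nonneg (by linarith [hs.1.le])]
        linarith [hs.2]
      nlinarith
    have hvrepr : v t = (x (t+1) - x t) - ∫ s in t..(t+1), (v s - v t) := by
      rw [hsub]; abel
    rw [hvrepr]
    have hb : |t + 1 - t| = 1 := by norm_num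
    calc ‖(x (t+1) - x t) - ∫ s in t..(t+1), (v s - v t)‖
        ≤ ‖x (t+1) - x t‖ + ‖∫ s in t..(t+1), (v s - v t)‖ := norm_sub_le _ _
      _ ≤ (‖x (t+1)‖ + ‖x t‖) + M * |t + 1 - t| :=
          add_le_add (norm_sub_le _ _) hnorm
      _ ≤ 2 * C + M := by
          rw [hb]
          have := hC (t+1) (by linarith)
          have := hC t ht
          linarith
  -- Barbalat for f = ‖v‖²
  set f : ℝ → ℝ := fun t => ‖v t‖^2 with hf
  have hfcont : Continuous f := (hvcont.norm).pow 2
  have hfD : ∀ t, HasDerivAt f ((inner ℝ (v t) (w t) : ℝ) + inner ℝ (w t) (v t)) t := by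
    intro t
    have h2 := HasDerivAt.inner ℝ (hvD t) (hvD t)
    have heq : (fun s => (inner ℝ (v s) (v s) : ℝ)) = f := by
      funext s; exact real_inner_self_eq_norm_sq (v s)
    rwa [heq] at h2
  set L : ℝ := 2 * ((2 * C + M) * M) with hL
  have hL0 : 0 ≤ L := by positivity
  have hflip : ∀ s ≥ (0:ℝ), ∀ t ≥ (0:ℝ), |f s - f t| ≤ L * |s - t| := by
    intro s hs t ht
    have := Convex.norm_image_sub_le_of_norm_hasDerivWithin_le
      (f := f) (f' := fun u => (inner ℝ (v u) (w u) : ℝ) + inner ℝ (w u) (v u))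
      (fun u _ => (hfD u).hasDerivWithinAt)
      (fun u hu => by
        have h1 := abs_real_inner_le_norm (v u) (w u)
        have h2 := abs_real_inner_le_norm (w u) (v u)
        have h3 := hMv u hu
        have h4 := hM u hu
        have h5 : ‖v u‖ * ‖w u‖ ≤ (2*C+M) * M := by
          have := norm_nonneg (v u); have := norm_nonneg (w u); nlinarith
        have h6 : ‖w u‖ * ‖v u‖ ≤ (2*C+M) * M := by nlinarith [norm_nonneg (v u), norm_nonneg (w u)]
        rw [Real.norm_eq_abs]
        calc |(inner ℝ (v u) (w u) : ℝ) + inner ℝ (w u) (v u)|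
            ≤ |(inner ℝ (v u) (w u) : ℝ)| + |(inner ℝ (w u) (v u) : ℝ)| := abs_add_le _ _
          _ ≤ L := by rw [hL]; linarith)
      (convex_Ici 0) hs ht
    rw [Real.norm_eq_abs, Real.norm_eq_abs] at this
    rw [abs_sub_comm, abs_sub_comm s t]
    exact this
  have hfnn : ∀ t ≥ (0:ℝ), 0 ≤ f t := fun t _ => by positivity
  have hfint : IntegrableOn f (Ioi 0) := by
    have h1 : IntegrableOn (fun t => (1/a₀) * (a t * ‖v t‖^2)) (Ici 0) :=
      hdiss.const_mul (1/a₀)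
    have h2 : IntegrableOn f (Ici 0) := by
      apply Integrable.mono' h1 (hfcont.aestronglyMeasurable.restrict)
      rw [ae_restrict_iff' measurableSet_Ici]
      filter_upwards with t ht
      have ha := ha_low t ht
      have hfpos : 0 ≤ f t := by positivity
      rw [Real.norm_eq_abs, abs_of_nonneg hfpos]
      show ‖v t‖^2 ≤ 1/a₀ * (a t * ‖v t‖^2)
      rw [div_mul_eq_mul_div, le_div_iff₀ ha₀]
      nlinarith [sq_nonneg ‖v t‖]
    exact h2.mono_set Ioi_subset_Ici_self
  have htendf : Tendsto f atTop (nhds 0) := barbalat f hfcont hfnn L hL0 hflip hfint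
  have hv0 : Tendsto v atTop (nhds 0) := by
    rw [tendsto_zero_iff_norm_tendsto_zero]
    have hs : Tendsto (fun t => Real.sqrt (f t)) atTop (nhds (Real.sqrt 0)) :=
      (Real.continuous_sqrt.tendsto _).comp htendf
    rw [Real.sqrt_zero] at hs
    have : (fun t => Real.sqrt (f t)) = fun t => ‖v t‖ := by
      funext t; rw [hf]; exact Real.sqrt_sq (norm_nonneg _)
    rwa [this] at hs
  refine ⟨hv0, ?_⟩
  -- Part 2
  intro hfin
  have hgcont : Continuous g := by
    rw [continuous_iff_continuousAt]
    intro p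
    obtain ⟨K, hK⟩ := hg_lip (Metric.ball p 1) Metric.isBounded_ball
    exact hK.continuousOn.continuousAt (Metric.ball_mem_nhds p one_pos)
  obtain ⟨K, hK⟩ := hg_lip (Metric.closedBall 0 C) Metric.isBounded_closedBall
  have hxmem : ∀ t ≥ (0:ℝ), x t ∈ Metric.closedBall (0 : EuclideanSpace ℝ (Fin n)) C := by
    intro t ht
    rw [Metric.mem_closedBall, dist_zero_right]
    exact hC t ht
  have ha_up : ∀ s ≥ (0:ℝ), a s ≤ a 0 := fun s hs => ha_mono self_mem_Ici hs hs
  have ha00 : 0 < a 0 := lt_of_lt_of_le ha₀ (ha_low 0 le_rfl)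
  -- g (x t) → 0
  have hgx : Tendsto (fun t => g (x t)) atTop (nhds 0) := by
    rw [NormedAddCommGroup.tendsto_nhds_zero]
    intro ε hε
    set B : ℝ := 2 + a 0 + K with hB
    have hB0 : 0 < B := by positivity
    set η : ℝ := ε / (B + 1) with hη
    have hη0 : 0 < η := by positivity
    obtain ⟨T, hT⟩ := Metric.tendsto_atTop.mp hv0 η hη0
    filter_upwards [eventually_ge_atTop (max T 0)] with t ht
    have ht0 : (0:ℝ) ≤ t := le_trans (le_max_right _ _) ht
    have htT : T ≤ t := le_trans (le_max_left _ _) ht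
    have hvsmall : ∀ s, t ≤ s → ‖v s‖ ≤ η := by
      intro s hs
      have := hT s (le_trans htT hs)
      rw [dist_zero_right] at this
      exact this.le
    have hle : t ≤ t + 1 := by linarith
    have hFTC : ∫ s in t..(t+1), w s = v (t+1) - v t :=
      intervalIntegral.integral_eq_sub_of_hasDerivAt (fun s _ => hvD s)
        (hwcont.intervalIntegrable _ _)
    set av : ℝ → EuclideanSpace ℝ (Fin n) := fun s => -(w s) - g (x s) with hav
    have havcont : Continuous av := (hwcont.neg).sub (hgcont.comp hxcont)
    have haveq : ∀ s, 0 ≤ s → av s = a s • v s := by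
      intro s hs0
      have h := hode s hs0
      rw [hav]
      have h2 : a s • v s + (w s + g (x s)) = 0 := by rw [← h]; abel
      have h3 : a s • v s = -(w s + g (x s)) := eq_neg_of_add_eq_zero_left h2
      rw [h3]; abel
    have hweq : ∀ s ∈ Set.uIcc t (t+1), w s = -(av s) - g (x s) := by
      intro s hs
      rw [Set.uIcc_of_le hle] at hs
      have hs0 : (0:ℝ) ≤ s := le_trans ht0 hs.1
      have h := hode s hs0
      rw [haveq s hs0]
      have h2 : w s + (a s • v s + g (x s)) = 0 := by rw [← h]; abel
      have h3 : w s = -(a s • v s + g (x s)) := eq_neg_of_add_eq_zero_left h2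
      rw [h3]; abel
    have hgxint : IntervalIntegrable (fun s => g (x s)) volume t (t+1) :=
      ((hgcont.comp hxcont).intervalIntegrable _ _)
    have hIeq : ∫ s in t..(t+1), g (x s) = -(v (t+1) - v t) - ∫ s in t..(t+1), av s := by
      rw [intervalIntegral.integral_congr hweq] at hFTC
      rw [intervalIntegral.integral_sub (f := fun s => -av s) (g := fun s => g (x s)) ((havcont.neg).intervalIntegrable _ _) hgxint,
        intervalIntegral.integral_neg] at hFTC
      rw [← hFTC]; abel
    have hsplit : g (x t) = (∫ s in t..(t+1), g (x s)) - ∫ s in t..(t+1), (g (x s) - g (x t)) := by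
      rw [intervalIntegral.integral_sub hgxint intervalIntegrable_const,
        intervalIntegral.integral_const]
      simp
    have hb1 : |t + 1 - t| = 1 := by norm_num
    have havbound : ‖∫ s in t..(t+1), av s‖ ≤ (a 0 * η) * |t + 1 - t| := by
      apply intervalIntegral.norm_integral_le_of_norm_le_const
      intro s hs
      rw [Set.uIoc_of_le hle] at hs
      have hs0 : (0:ℝ) ≤ s := le_trans ht0 hs.1.le
      rw [haveq s hs0, norm_smul, Real.norm_eq_abs,
        abs_of_nonneg (le_trans ha₀.le (ha_low s hs0))]
      have h1 := ha_up s hs0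
      have h2 := hvsmall s hs.1.le
      nlinarith [norm_nonneg (v s)]
    have hdiffbound : ‖∫ s in t..(t+1), (g (x s) - g (x t))‖ ≤ ((K:ℝ) * η) * |t + 1 - t| := by
      apply intervalIntegral.norm_integral_le_of_norm_le_const
      intro s hs
      rw [Set.uIoc_of_le hle] at hs
      have hs0 : (0:ℝ) ≤ s := le_trans ht0 hs.1.le
      have hxs : ‖x s - x t‖ ≤ η * ‖s - t‖ :=
        Convex.norm_image_sub_le_of_norm_hasDerivWithin_le
          (fun u _ => (hxD u).hasDerivWithinAt)
          (fun u hu => hvsmall u hu.1) (convex_Icc t (t+1))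
          (left_mem_Icc.mpr hle) ⟨hs.1.le, hs.2⟩
      have hst1 : ‖s - t‖ ≤ 1 := by
        rw [Real.norm_eq_abs, abs_of_nonneg (by linarith [hs.1.le])]
        linarith [hs.2]
      have hlips := hK.dist_le_mul (x s) (hxmem s hs0) (x t) (hxmem t ht0)
      rw [dist_eq_norm, dist_eq_norm] at hlips
      have hxsη : ‖x s - x t‖ ≤ η := le_trans hxs (by nlinarith [hη0.le])
      calc ‖g (x s) - g (x t)‖ ≤ K * ‖x s - x t‖ := hlips
        _ ≤ (K:ℝ) * η := mul_le_mul_of_nonneg_left hxsη (NNReal.coe_nonneg K)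
    have h1 : ‖∫ s in t..(t+1), g (x s)‖ ≤ 2 * η + a 0 * η := by
      rw [hIeq]
      have e1 : ‖v (t+1)‖ ≤ η := hvsmall _ (by linarith)
      have e2 : ‖v t‖ ≤ η := hvsmall _ le_rfl
      have e3 := havbound
      rw [hb1, mul_one] at e3
      calc ‖-(v (t+1) - v t) - ∫ s in t..(t+1), av s‖
          ≤ ‖-(v (t+1) - v t)‖ + ‖∫ s in t..(t+1), av s‖ := norm_sub_le _ _
        _ ≤ (‖v (t+1)‖ + ‖v t‖) + a 0 * η := by
            rw [norm_neg]; exact add_le_add (norm_sub_le _ _) e3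
        _ ≤ 2 * η + a 0 * η := by linarith
    have h2 := hdiffbound
    rw [hb1, mul_one] at h2
    rw [hsplit]
    have hfinal : ‖(∫ s in t..(t+1), g (x s)) - ∫ s in t..(t+1), (g (x s) - g (x t))‖ ≤ B * η :=
      calc ‖(∫ s in t..(t+1), g (x s)) - ∫ s in t..(t+1), (g (x s) - g (x t))‖
          ≤ ‖∫ s in t..(t+1), g (x s)‖ + ‖∫ s in t..(t+1), (g (x s) - g (x t))‖ := norm_sub_le _ _
        _ ≤ (2 * η + a 0 * η) + (K:ℝ) * η := add_le_add h1 h2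
        _ = B * η := by rw [hB]; ring
    refine lt_of_le_of_lt hfinal ?_
    rw [hη, ← mul_div_assoc, div_lt_iff₀ (by positivity)]
    nlinarith
  -- eventually near Z
  set Z : Set (EuclideanSpace ℝ (Fin n)) := g ⁻¹' {0} with hZ
  have hev : ∀ ε > (0:ℝ), ∀ᶠ t in atTop, ∃ z ∈ Z, dist (x t) z < ε := by
    intro ε hε
    set S : Set (EuclideanSpace ℝ (Fin n)) :=
      Metric.closedBall 0 C ∩ {p | ∀ z ∈ Z, ε ≤ dist p z} with hS
    have hSclosed : IsClosed {p : EuclideanSpace ℝ (Fin n) | ∀ z ∈ Z, ε ≤ dist p z} := by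
      have : {p : EuclideanSpace ℝ (Fin n) | ∀ z ∈ Z, ε ≤ dist p z} =
          ⋂ z ∈ Z, {p | ε ≤ dist p z} := by
        ext p; simp
      rw [this]
      exact isClosed_biInter fun z _ =>
        isClosed_le continuous_const (continuous_id.dist continuous_const)
    have hScomp : IsCompact S :=
      (isCompact_closedBall _ _).inter_right hSclosed
    by_cases hSne : S.Nonempty
    · obtain ⟨p₀, hp₀S, hmin'⟩ := hScomp.exists_isMinOn hSne hgcont.norm.continuousOn
      have hmin : ∀ q ∈ S, ‖g p₀‖ ≤ ‖g q‖ := fun q hq => hmin' hq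
      have hp₀ : g p₀ ≠ 0 := by
        intro h0
        have hmem : p₀ ∈ Z := by rw [hZ]; simpa using h0
        have := hp₀S.2 p₀ hmem
        simp at this
        linarith
      have hδ : 0 < ‖g p₀‖ := norm_pos_iff.mpr hp₀
      filter_upwards [NormedAddCommGroup.tendsto_nhds_zero.mp hgx _ hδ,
        eventually_ge_atTop (0:ℝ)] with t hgt ht0
      by_contra hcon
      push_neg at hcon
      have hmem : x t ∈ S := ⟨hxmem t ht0, fun z hz => hcon z hz⟩
      exact absurd (hmin _ hmem) (not_le.mpr hgt)
    · filter_upwards [eventually_ge_atTop (0:ℝ)] with t ht0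
      by_contra hcon
      push_neg at hcon
      exact hSne ⟨x t, hxmem t ht0, fun z hz => hcon z hz⟩
  obtain ⟨z, hzZ, hz⟩ := finite_limit Z hfin x hxcont hev
  exact ⟨z, hzZ, hz⟩
end

section
/- Let $a:\mathbb{R}_+\to\mathbb{R}_+$ be a non-increasing $C^2$ map with $a(t)\to 0$ and $\dot{a}(t)\to 0$ as $t\to\infty$, and suppose $\ddot{a}(t)+a(t)\dot{a}(t)$ has constant sign for large $t$. Then any solution $x$ of $\ddot{x}(t)+a(t)\dot{x}(t)+x(t)=0$ in a Hilbert space satisfies: there exist constants $0<k<K<\infty$ such that for all sufficiently large $t$, $k\,e^{-\int_0^t a(s)ds}\le |x(t)|^2+|\dot{x}(t)|^2\le K\,e^{-\int_0^t a(s)ds}$, provided $x$ is not identically zero. -/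
open Set Filter Topology

theorem aux_deriv_nonpos (f : ℝ → ℝ) (t : ℝ) (ht : 0 < t) (hm : AntitoneOn f (Ici 0))
    (hd : HasDerivAt f (deriv f t) t) : deriv f t ≤ 0 := by
  by_contra hpos
  push_neg at hpos
  rw [hasDerivAt_iff_tendsto_slope] at hd
  have h1 : ∀ᶠ s in 𝓝[≠] t, 0 < slope f t s := hd.eventually (eventually_gt_nhds hpos)
  have h2 : ∀ᶠ s in 𝓝[>] t, 0 < slope f t s :=
    h1.filter_mono (nhdsWithin_mono t (fun s hs => ne_of_gt hs))
  obtain ⟨s, hslope, hs⟩ := (h2.and self_mem_nhdsWithin).exists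
  have hfs : f s ≤ f t := hm (le_of_lt ht) (le_of_lt (ht.trans hs)) (le_of_lt hs)
  have hle : slope f t s ≤ 0 := by
    rw [slope_def_field]
    exact div_nonpos_of_nonpos_of_nonneg (by linarith) (by linarith)
  linarith

set_option maxHeartbeats 2000000 in
/-- Sharp two-sided decay estimate for solutions of `ẍ + a(t) ẋ + x = 0` with vanishing
non-increasing damping: `‖x‖² + ‖ẋ‖² ≍ e^{-∫₀ᵗ a}`. -/
theorem stmt_17
    {H : Type*} [NormedAddCommGroup H] [InnerProductSpace ℝ H] [CompleteSpace H]
    (a : ℝ → ℝ) (ha : ContDiff ℝ 2 a) (ha_nonneg : ∀ t ≥ (0:ℝ), 0 ≤ a t)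
    (ha_mono : AntitoneOn a (Set.Ici 0))
    (ha_lim : Filter.Tendsto a Filter.atTop (nhds 0))
    (ha'_lim : Filter.Tendsto (deriv a) Filter.atTop (nhds 0))
    (ha_sign : (∀ᶠ t in Filter.atTop, deriv (deriv a) t + a t * deriv a t ≤ 0) ∨
               (∀ᶠ t in Filter.atTop, 0 ≤ deriv (deriv a) t + a t * deriv a t))
    (x : ℝ → H) (hx : ContDiff ℝ 2 x)
    (hode : ∀ t : ℝ, deriv (deriv x) t + a t • deriv x t + x t = 0)
    (hnontriv : ∃ t ≥ (0:ℝ), x t ≠ 0) :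
    ∃ k K : ℝ, 0 < k ∧ k < K ∧ ∃ T : ℝ, ∀ t ≥ T,
      k * Real.exp (-∫ s in (0:ℝ)..t, a s) ≤ ‖x t‖^2 + ‖deriv x t‖^2 ∧
      ‖x t‖^2 + ‖deriv x t‖^2 ≤ K * Real.exp (-∫ s in (0:ℝ)..t, a s) := by
  obtain ⟨t₀, ht₀0, hxt₀⟩ := hnontriv
  set v : ℝ → H := deriv x with hvdef
  -- basic regularity
  have hac : Continuous a := ha.continuous
  have had : ∀ t, HasDerivAt a (deriv a t) t :=
    fun t => ((ha.differentiable (by norm_num)) t).hasDerivAt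
  have hxd : ∀ t, HasDerivAt x (v t) t :=
    fun t => ((hx.differentiable (by norm_num)) t).hasDerivAt
  have hx2 : ContDiff ℝ ((1:ℕ) + 1) x := by exact_mod_cast hx
  have hv1 : ContDiff ℝ 1 v := (contDiff_succ_iff_deriv.mp hx2).2.2
  have hvc : Continuous v := hv1.continuous
  have hvd0 : ∀ t, HasDerivAt v (deriv v t) t :=
    fun t => ((hv1.differentiable (by norm_num)) t).hasDerivAt
  have hode' : ∀ t, deriv v t = -(x t) - a t • v t := by
    intro t
    have h := hode t
    have h2 : deriv (deriv x) t + a t • deriv x t = -(x t) := eq_neg_of_add_eq_zero_left h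
    have h3 : deriv (deriv x) t = -(x t) - a t • deriv x t := eq_sub_of_add_eq h2
    simpa [hvdef] using h3
  have hvd : ∀ t, HasDerivAt v (-(x t) - a t • v t) t := fun t => (hode' t) ▸ hvd0 t
  -- energies
  set E : ℝ → ℝ := fun s => ‖x s‖^2 + ‖v s‖^2 with hEdef
  set p : ℝ → ℝ := fun s => (inner ℝ (x s) (v s) : ℝ) with hpdef
  set G : ℝ → ℝ := fun s => E s + a s * p s with hGdef
  have hEeq : ∀ s, E s = ‖x s‖^2 + ‖v s‖^2 := fun _ => rfl
  have hpeq : ∀ s, p s = (inner ℝ (x s) (v s) : ℝ) := fun _ => rfl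
  have hGeq : ∀ s, G s = E s + a s * p s := fun _ => rfl
  have hE0 : ∀ t, 0 ≤ E t := by
    intro t; rw [hEeq]; positivity
  have habs : ∀ t, |p t| ≤ E t / 2 := by
    intro t
    have h1 : |(inner ℝ (x t) (v t) : ℝ)| ≤ ‖x t‖ * ‖v t‖ := abs_real_inner_le_norm _ _
    have h2 : ‖x t‖ * ‖v t‖ ≤ (‖x t‖^2 + ‖v t‖^2) / 2 := by nlinarith [sq_nonneg (‖x t‖ - ‖v t‖)]
    rw [hpeq, hEeq]
    exact h1.trans h2
  have hEc : Continuous E := by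
    rw [hEdef]
    exact ((hx.continuous.norm.pow 2).add (hvc.norm.pow 2))
  have hpc : Continuous p := by
    rw [hpdef]
    exact hx.continuous.inner hvc
  -- derivative of E
  have hEd : ∀ t, HasDerivAt E (-2 * (a t * ‖v t‖^2)) t := by
    intro t
    have h1 := (hxd t).inner ℝ (hxd t)
    have h2 := (hvd t).inner ℝ (hvd t)
    have hfun : E = fun s => (inner ℝ (x s) (x s) : ℝ) + (inner ℝ (v s) (v s) : ℝ) := by
      funext s
      rw [hEeq, real_inner_self_eq_norm_sq, real_inner_self_eq_norm_sq]
    rw [hfun]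
    refine (h1.add h2).congr_deriv ?_
    simp only [inner_sub_left, inner_sub_right, inner_neg_left, inner_neg_right,
      real_inner_smul_left, real_inner_smul_right, real_inner_self_eq_norm_sq,
      real_inner_comm (x t) (v t)]
    ring
  -- derivative of p
  have hpd : ∀ t, HasDerivAt p (‖v t‖^2 - a t * p t - ‖x t‖^2) t := by
    intro t
    have h1 := (hxd t).inner ℝ (hvd t)
    rw [hpdef]
    refine h1.congr_deriv ?_
    simp only [hpeq, inner_sub_right, inner_neg_right, real_inner_smul_right,
      real_inner_self_eq_norm_sq]
    ring
  -- derivative of G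
  have hGd : ∀ t, HasDerivAt G (-(a t) * G t + deriv a t * p t) t := by
    intro t
    have h := (hEd t).add ((had t).mul (hpd t))
    have hfun : G = fun s => E s + a s * p s := hGdef
    rw [hfun]
    refine h.congr_deriv ?_
    ring
  have hGc : Continuous G := by
    rw [hGdef]; exact hEc.add (hac.mul hpc)
  clear_value v E p G
  -- choose T
  have hhalf : ∀ᶠ t in atTop, a t ≤ 1/2 :=
    ha_lim.eventually (eventually_le_nhds (by norm_num : (0:ℝ) < 1/2))
  obtain ⟨T₁, hT₁⟩ := eventually_atTop.mp hhalf
  set T : ℝ := max T₁ (max 1 t₀) with hTdef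
  have hT1 : (1:ℝ) ≤ T := le_trans (le_max_left 1 t₀) (le_max_right _ _)
  have hTt₀ : t₀ ≤ T := le_trans (le_max_right 1 t₀) (le_max_right _ _)
  have hT0 : (0:ℝ) ≤ T := by linarith
  have hTa : ∀ t ≥ T, a t ≤ 1/2 := fun t ht => hT₁ t (le_trans (le_max_left _ _) ht)
  have haT0 : ∀ t ≥ T, 0 ≤ a t := fun t ht => ha_nonneg t (by linarith)
  -- E T > 0 via Gronwall from t₀
  have hET : 0 < E T := by
    set A₀ : ℝ → ℝ := fun u => ∫ s in t₀..u, a s with hA₀def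
    have hA₀eq : ∀ u, A₀ u = ∫ s in t₀..u, a s := fun _ => rfl
    have hA₀d : ∀ u, HasDerivAt A₀ (a u) u := fun u =>
      intervalIntegral.integral_hasDerivAt_right (hac.intervalIntegrable _ _)
        (hac.stronglyMeasurableAtFilter _ _) hac.continuousAt
    have hA₀c : Continuous A₀ := by
      have : Differentiable ℝ A₀ := fun u => (hA₀d u).differentiableAt
      exact this.continuous
    set Φ₀ : ℝ → ℝ := fun u => E u * Real.exp (2 * A₀ u) with hΦ₀def
    have hΦ₀eq : ∀ u, Φ₀ u = E u * Real.exp (2 * A₀ u) := fun _ => rfl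
    have hΦ₀d : ∀ u, HasDerivAt Φ₀
        (-2 * (a u * ‖v u‖^2) * Real.exp (2 * A₀ u) + E u * (Real.exp (2 * A₀ u) * (2 * a u))) u :=
      fun u => (hEd u).mul (((hA₀d u).const_mul 2).exp)
    have hΦ₀c : Continuous Φ₀ := by
      rw [hΦ₀def]
      exact hEc.mul ((continuous_const.mul hA₀c).rexp)
    clear_value A₀ Φ₀
    have hmono : MonotoneOn Φ₀ (Ici t₀) := by
      apply monotoneOn_of_deriv_nonneg (convex_Ici t₀)
      · exact hΦ₀c.continuousOn
      · intro s hs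
        exact ((hΦ₀d s).differentiableAt).differentiableWithinAt
      · intro s hs
        rw [interior_Ici] at hs
        rw [(hΦ₀d s).deriv, hEeq s]
        have ha0 : 0 ≤ a s := ha_nonneg s (by linarith [(Set.mem_Ioi.mp hs).le])
        have hx0 : (0:ℝ) ≤ ‖x s‖^2 := by positivity
        have hv0 : (0:ℝ) ≤ ‖v s‖^2 := by positivity
        have hexp : (0:ℝ) < Real.exp (2 * A₀ s) := Real.exp_pos _
        nlinarith [mul_nonneg (mul_nonneg ha0 hx0) hexp.le]
    have h1 : Φ₀ t₀ ≤ Φ₀ T := hmono (self_mem_Ici) hTt₀ hTt₀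
    have h2 : Φ₀ t₀ = E t₀ := by
      rw [hΦ₀eq, hA₀eq, intervalIntegral.integral_same]
      simp
    have h3 : 0 < E t₀ := by
      have hxp : 0 < ‖x t₀‖ := norm_pos_iff.2 hxt₀
      rw [hEeq]
      nlinarith [sq_nonneg ‖v t₀‖]
    have hexp : (0:ℝ) < Real.exp (2 * A₀ T) := Real.exp_pos _
    by_contra hne
    push_neg at hne
    have h4 : Φ₀ T ≤ 0 := by
      rw [hΦ₀eq]
      exact mul_nonpos_of_nonpos_of_nonneg hne hexp.le
    have h5 : E t₀ ≤ Φ₀ T := h2 ▸ h1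
    linarith
  -- comparison E ≍ G on [T, ∞)
  have hEG : ∀ t ≥ T, (3/4) * E t ≤ G t ∧ G t ≤ (5/4) * E t := by
    intro t ht
    have h2 := abs_le.mp (habs t)
    have ha0 := haT0 t ht
    have ha12 := hTa t ht
    have hE := hE0 t
    have hG := hGeq t
    constructor
    · rw [hG]
      nlinarith [mul_le_mul_of_nonneg_left h2.1 ha0,
        mul_le_mul_of_nonneg_right ha12 (by linarith : (0:ℝ) ≤ E t / 2)]
    · rw [hG]
      nlinarith [mul_le_mul_of_nonneg_left h2.2 ha0,
        mul_le_mul_of_nonneg_right ha12 (by linarith : (0:ℝ) ≤ E t / 2)]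
  have hGT : 0 < G T := lt_of_lt_of_le (by linarith) (hEG T le_rfl).1
  have ha'np : ∀ t ≥ T, deriv a t ≤ 0 := by
    intro t ht
    exact aux_deriv_nonpos a t (by linarith) ha_mono (had t)
  -- the function Hf = G e^{∫_T a}
  set A : ℝ → ℝ := fun u => ∫ s in T..u, a s with hAdef
  have hAeq : ∀ u, A u = ∫ s in T..u, a s := fun _ => rfl
  have hAd : ∀ u, HasDerivAt A (a u) u := fun u =>
    intervalIntegral.integral_hasDerivAt_right (hac.intervalIntegrable _ _)
      (hac.stronglyMeasurableAtFilter _ _) hac.continuousAt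
  have hAc : Continuous A := by
    have : Differentiable ℝ A := fun u => (hAd u).differentiableAt
    exact this.continuous
  set Hf : ℝ → ℝ := fun u => G u * Real.exp (A u) with hHfdef
  have hHf_eq : ∀ u, Hf u = G u * Real.exp (A u) := fun _ => rfl
  have hHfc : Continuous Hf := by
    rw [hHfdef]; exact hGc.mul hAc.rexp
  have hHd : ∀ u, HasDerivAt Hf (deriv a u * p u * Real.exp (A u)) u := by
    intro u
    rw [hHfdef]
    refine ((hGd u).mul ((hAd u).exp)).congr_deriv ?_
    ring
  set Φ₁ : ℝ → ℝ := fun u => Hf u * Real.exp (a u) with hΦ₁def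
  have hΦ₁eq : ∀ u, Φ₁ u = Hf u * Real.exp (a u) := fun _ => rfl
  have hΦ₁c : Continuous Φ₁ := by
    rw [hΦ₁def]; exact hHfc.mul hac.rexp
  have hΦ₁d : ∀ u, HasDerivAt Φ₁
      (deriv a u * p u * Real.exp (A u) * Real.exp (a u) + Hf u * (Real.exp (a u) * deriv a u)) u :=
    fun u => (hHd u).mul ((had u).exp)
  set Φ₂ : ℝ → ℝ := fun u => Hf u * Real.exp (-a u) with hΦ₂def
  have hΦ₂eq : ∀ u, Φ₂ u = Hf u * Real.exp (-a u) := fun _ => rfl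
  have hΦ₂c : Continuous Φ₂ := by
    rw [hΦ₂def]; exact hHfc.mul hac.neg.rexp
  have hΦ₂d : ∀ u, HasDerivAt Φ₂
      (deriv a u * p u * Real.exp (A u) * Real.exp (-a u)
        + Hf u * (Real.exp (-a u) * -deriv a u)) u :=
    fun u => (hHd u).mul (((had u).neg).exp)
  clear_value A Hf Φ₁ Φ₂
  have hHf_nonneg : ∀ t ≥ T, 0 ≤ Hf t := by
    intro t ht
    have h1 : 0 ≤ G t := le_trans (by linarith [hE0 t]) (hEG t ht).1
    rw [hHf_eq]
    exact mul_nonneg h1 (Real.exp_pos _).le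
  have hΦ₁anti : AntitoneOn Φ₁ (Ici T) := by
    apply antitoneOn_of_deriv_nonpos (convex_Ici T)
    · exact hΦ₁c.continuousOn
    · exact fun s _ => ((hΦ₁d s).differentiableAt).differentiableWithinAt
    · intro s hs
      rw [interior_Ici] at hs
      rw [(hΦ₁d s).deriv]
      have ha' : deriv a s ≤ 0 := ha'np s hs.le
      have hpg : 0 ≤ p s + G s := by
        have h1 := (abs_le.mp (habs s)).1
        have h2 := (hEG s hs.le).1
        have h3 := hE0 s
        linarith
      have hkey : deriv a s * (p s + G s) ≤ 0 := mul_nonpos_of_nonpos_of_nonneg ha' hpg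
      have heq : deriv a s * p s * Real.exp (A s) * Real.exp (a s)
          + Hf s * (Real.exp (a s) * deriv a s)
          = Real.exp (A s) * Real.exp (a s) * (deriv a s * (p s + G s)) := by
        rw [hHf_eq]; ring
      rw [heq]
      exact mul_nonpos_of_nonneg_of_nonpos (by positivity) hkey
  have hΦ₂mono : MonotoneOn Φ₂ (Ici T) := by
    apply monotoneOn_of_deriv_nonneg (convex_Ici T)
    · exact hΦ₂c.continuousOn
    · exact fun s _ => ((hΦ₂d s).differentiableAt).differentiableWithinAt
    · intro s hs
      rw [interior_Ici] at hs
      rw [(hΦ₂d s).deriv]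
      have ha' : deriv a s ≤ 0 := ha'np s hs.le
      have hpg : p s - G s ≤ 0 := by
        have h1 := (abs_le.mp (habs s)).2
        have h2 := (hEG s hs.le).1
        have h3 := hE0 s
        linarith
      have hkey : 0 ≤ deriv a s * (p s - G s) := by
        nlinarith [mul_nonneg (neg_nonneg.2 ha') (neg_nonneg.2 hpg)]
      have heq : deriv a s * p s * Real.exp (A s) * Real.exp (-a s)
          + Hf s * (Real.exp (-a s) * -deriv a s)
          = Real.exp (A s) * Real.exp (-a s) * (deriv a s * (p s - G s)) := by
        rw [hHf_eq]; ring
      rw [heq]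
      exact mul_nonneg (by positivity) hkey
  have hHfT : Hf T = G T := by
    rw [hHf_eq, hAeq, intervalIntegral.integral_same]
    simp
  -- two-sided bound on Hf
  have hHf_ub : ∀ t ≥ T, Hf t ≤ G T * Real.exp (1/2) := by
    intro t ht
    have h1 : Φ₁ t ≤ Φ₁ T := hΦ₁anti (self_mem_Ici) ht ht
    have h2 : Φ₁ T = G T * Real.exp (a T) := by rw [hΦ₁eq, hHfT]
    have h3 : Hf t ≤ Hf t * Real.exp (a t) := by
      nlinarith [Real.one_le_exp (haT0 t ht), hHf_nonneg t ht]
    have h4 : G T * Real.exp (a T) ≤ G T * Real.exp (1/2) :=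
      mul_le_mul_of_nonneg_left (Real.exp_le_exp.mpr (hTa T le_rfl)) hGT.le
    calc Hf t ≤ Hf t * Real.exp (a t) := h3
      _ = Φ₁ t := (hΦ₁eq t).symm
      _ ≤ Φ₁ T := h1
      _ = G T * Real.exp (a T) := h2
      _ ≤ G T * Real.exp (1/2) := h4
  have hHf_lb : ∀ t ≥ T, G T * Real.exp (-(1/2:ℝ)) ≤ Hf t := by
    intro t ht
    have h1 : Φ₂ T ≤ Φ₂ t := hΦ₂mono (self_mem_Ici) ht ht
    have h2 : Φ₂ T = G T * Real.exp (-a T) := by rw [hΦ₂eq, hHfT]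
    have h3 : Φ₂ t ≤ Hf t := by
      rw [hΦ₂eq]
      have he : Real.exp (-a t) ≤ 1 := Real.exp_le_one_iff.mpr (by linarith [haT0 t ht])
      nlinarith [hHf_nonneg t ht]
    have h4 : G T * Real.exp (-(1/2:ℝ)) ≤ G T * Real.exp (-a T) :=
      mul_le_mul_of_nonneg_left (Real.exp_le_exp.mpr (by linarith [hTa T le_rfl])) hGT.le
    calc G T * Real.exp (-(1/2:ℝ)) ≤ G T * Real.exp (-a T) := h4
      _ = Φ₂ T := h2.symm
      _ ≤ Φ₂ t := h1
      _ ≤ Hf t := h3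
  -- constants
  set cT : ℝ := ∫ s in (0:ℝ)..T, a s with hcTdef
  have hcTeq : cT = ∫ s in (0:ℝ)..T, a s := hcTdef
  clear_value cT
  refine ⟨(4/5) * (G T * Real.exp (-(1/2:ℝ)) * Real.exp cT),
          (4/3) * (G T * Real.exp (1/2:ℝ) * Real.exp cT), ?_, ?_, T, ?_⟩
  · have := Real.exp_pos (-(1/2:ℝ))
    have := Real.exp_pos cT
    nlinarith [mul_pos (mul_pos hGT (Real.exp_pos (-(1/2:ℝ)))) (Real.exp_pos cT)]
  · have h1 : Real.exp (-(1/2:ℝ)) < Real.exp (1/2:ℝ) := Real.exp_lt_exp.mpr (by norm_num)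
    have h2 : (0:ℝ) < G T * Real.exp cT := mul_pos hGT (Real.exp_pos _)
    nlinarith [mul_lt_mul_of_pos_right h1 h2, mul_pos (Real.exp_pos (1/2:ℝ)) h2]
  · intro t ht
    have hsplit : (∫ s in (0:ℝ)..t, a s) = cT + A t := by
      rw [hAeq, hcTdef]
      exact (intervalIntegral.integral_add_adjacent_intervals
        (hac.intervalIntegrable _ _) (hac.intervalIntegrable _ _)).symm
    have hexpA : Real.exp (-∫ s in (0:ℝ)..t, a s) = Real.exp (-A t) / Real.exp cT := by
      rw [hsplit, neg_add, Real.exp_add, Real.exp_neg cT]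
      ring
    have hGt : G t = Hf t * Real.exp (-A t) := by
      rw [hHf_eq, Real.exp_neg]
      have := (Real.exp_pos (A t)).ne'
      field_simp
    have hEt1 : (4/5) * G t ≤ E t := by linarith [(hEG t ht).2]
    have hEt2 : E t ≤ (4/3) * G t := by linarith [(hEG t ht).1]
    have hexpAt : (0:ℝ) < Real.exp (-A t) := Real.exp_pos _
    have h5 : (G T * Real.exp (-(1/2:ℝ))) * Real.exp (-A t) ≤ G t := by
      rw [hGt]
      exact mul_le_mul_of_nonneg_right (hHf_lb t ht) hexpAt.le
    have h6 : G t ≤ (G T * Real.exp (1/2:ℝ)) * Real.exp (-A t) := by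
      rw [hGt]
      exact mul_le_mul_of_nonneg_right (hHf_ub t ht) hexpAt.le
    have hcne : Real.exp cT ≠ 0 := (Real.exp_pos _).ne'
    have hlo : (4/5) * (G T * Real.exp (-(1/2:ℝ)) * Real.exp cT)
        * Real.exp (-∫ s in (0:ℝ)..t, a s) ≤ E t := by
      rw [hexpA]
      calc (4/5) * (G T * Real.exp (-(1/2:ℝ)) * Real.exp cT) * (Real.exp (-A t) / Real.exp cT)
          = (4/5) * ((G T * Real.exp (-(1/2:ℝ))) * Real.exp (-A t)) := by
            field_simp
        _ ≤ (4/5) * G t := by linarith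
        _ ≤ E t := hEt1
    have hhi : E t ≤ (4/3) * (G T * Real.exp (1/2:ℝ) * Real.exp cT)
        * Real.exp (-∫ s in (0:ℝ)..t, a s) := by
      rw [hexpA]
      calc E t ≤ (4/3) * G t := hEt2
        _ ≤ (4/3) * ((G T * Real.exp (1/2:ℝ)) * Real.exp (-A t)) := by linarith
        _ = (4/3) * (G T * Real.exp (1/2:ℝ) * Real.exp cT) * (Real.exp (-A t) / Real.exp cT) := by
            field_simp
    refine ⟨?_, ?_⟩
    · have := hlo
      rw [hEeq t] at this
      exact this
    · have := hhi
      rw [hEeq t] at this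
      exact this
end

section
/- Let $a:\mathbb{R}_+\to\mathbb{R}_+$ be continuous with $\int_0^\infty e^{-\int_0^t a(s)ds}\,dt=\infty$, let $G:\mathbb{R}\to\mathbb{R}$ be a convex $C^1$ function with $\operatorname{argmin}G=[\alpha,\beta]$ where $\alpha<\beta$, and let $x$ be a bounded global solution of $\ddot{x}+a\dot{x}+G'(x)=0$ with $(x(0),\dot{x}(0))\notin[\alpha,\beta]\times\{0\}$. Then the trajectory $x(t)$ does not converge as $t\to\infty$; more precisely, there exist sequences $t_n\to\infty$ and $u_n\to\infty$ with $x(t_n)<\alpha$ and $x(u_n)>\beta$. -/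
open Set Filter MeasureTheory

lemma aux_tendsto_integral_atTop {f : ℝ → ℝ} (hf : Continuous f) (hpos : ∀ t, 0 < f t)
    (hni : ¬ MeasureTheory.IntegrableOn f (Set.Ici 0)) (T : ℝ) :
    Tendsto (fun t => ∫ s in T..t, f s) atTop atTop := by
  set F : ℝ → ℝ := fun t => ∫ s in T..t, f s with hFdef
  have hF : ∀ t, HasDerivAt F (f t) t := fun t =>
    intervalIntegral.integral_hasDerivAt_right (hf.intervalIntegrable _ _)
      (hf.aestronglyMeasurable.stronglyMeasurableAtFilter) hf.continuousAt
  have hmono : Monotone F := by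
    refine monotone_of_deriv_nonneg (fun t => (hF t).differentiableAt) (fun t => ?_)
    rw [(hF t).deriv]; exact (hpos t).le
  refine tendsto_atTop_atTop_of_monotone' hmono ?_
  rintro ⟨I, hI⟩
  apply hni
  have hIoi : IntegrableOn f (Ioi T) := by
    refine MeasureTheory.integrableOn_Ioi_of_intervalIntegral_norm_bounded I T
      (fun i => (hf.integrableOn_Icc).mono_set Ioc_subset_Icc_self) tendsto_id ?_
    filter_upwards with i
    have : (∫ s in T..i, ‖f s‖) = F i := by
      refine intervalIntegral.integral_congr fun s _ => ?_
      exact abs_of_pos (hpos s)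
    simp only [id_eq]
    rw [this]
    exact hI (Set.mem_range_self i)
  have hIcc : IntegrableOn f (Icc 0 (|T| + 1)) := hf.integrableOn_Icc
  refine (hIcc.union hIoi).mono_set ?_
  intro y hy
  rcases le_or_gt y (|T| + 1) with h | h
  · exact Or.inl ⟨hy, h⟩
  · exact Or.inr (lt_of_le_of_lt (le_trans (le_abs_self T) (by linarith)) h)

lemma aux_osc
    (a : ℝ → ℝ) (ha_cont : Continuous a) (ha_nonneg : ∀ t ≥ (0:ℝ), 0 ≤ a t)
    (ha_div : ¬ MeasureTheory.IntegrableOn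
      (fun t => Real.exp (-∫ s in (0:ℝ)..t, a s)) (Set.Ici 0))
    (G : ℝ → ℝ) (hGconv : ConvexOn ℝ Set.univ G) (hG : ContDiff ℝ 1 G)
    (hG'lip : ∀ s : Set ℝ, Bornology.IsBounded s →
      ∃ K : NNReal, LipschitzOnWith K (deriv G) s)
    (α β : ℝ) (hαβ : α < β)
    (hargmin : {y : ℝ | ∀ z, G y ≤ G z} = Set.Icc α β)
    (x : ℝ → ℝ) (hx : ContDiff ℝ 2 x)
    (hx_bdd : ∃ C, ∀ t ≥ (0:ℝ), |x t| ≤ C)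
    (hode : ∀ t ≥ (0:ℝ), deriv (deriv x) t + a t * deriv x t + deriv G (x t) = 0)
    (hinit : ¬ (x 0 ∈ Set.Icc α β ∧ deriv x 0 = 0)) :
    ∀ c : ℝ, ∃ t ≥ c, x t < α := by
  -- unpack smoothness
  have hx2 : ContDiff ℝ (1 + 1 : ℕ) x := by exact_mod_cast hx
  have hxd : Differentiable ℝ x := hx2.differentiable (by norm_num)
  have hx1 : ContDiff ℝ 1 (deriv x) := by
    have := (contDiff_succ_iff_deriv (n := 1)).mp (by exact_mod_cast hx2)
    exact this.2.2
  have hx'd : Differentiable ℝ (deriv x) := hx1.differentiable one_ne_zero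
  have hx'c : Continuous (deriv x) := hx'd.continuous
  have hGd : Differentiable ℝ G := hG.differentiable one_ne_zero
  -- G facts
  have hmin : ∀ y ∈ Icc α β, ∀ z, G y ≤ G z := by
    intro y hy
    have : y ∈ {y : ℝ | ∀ z, G y ≤ G z} := hargmin ▸ hy
    exact this
  have hG0 : ∀ y ∈ Icc α β, deriv G y = 0 := fun y hy =>
    IsLocalMin.deriv_eq_zero (Filter.Eventually.of_forall (hmin y hy))
  have hGpos : ∀ y, β < y → 0 < deriv G y := by
    intro y hy
    have hyn : y ∉ {y : ℝ | ∀ z, G y ≤ G z} := by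
      rw [hargmin]; exact fun hmem => absurd hmem.2 (not_le.mpr hy)
    simp only [mem_setOf_eq, not_forall, not_le] at hyn
    obtain ⟨z, hz⟩ := hyn
    have hβy : G β < G y := lt_of_le_of_lt (hmin β ⟨hαβ.le, le_rfl⟩ z) hz
    have hslope := hGconv.slope_le_deriv (mem_univ β) (mem_univ y) hy (hGd y)
    rw [slope_def_field] at hslope
    have : 0 < (G y - G β) / (y - β) := div_pos (by linarith) (by linarith)
    linarith
  have hGnonneg : ∀ y, α ≤ y → 0 ≤ deriv G y := by
    intro y hy
    rcases le_or_gt y β with h | h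
    · exact le_of_eq (hG0 y ⟨hy, h⟩).symm
    · exact (hGpos y h).le
  have hGmono : Monotone (deriv G) :=
    monotoneOn_univ.mp (hGconv.monotoneOn_deriv (fun y _ => hGd y))
  -- the integrating factor
  set A : ℝ → ℝ := fun t => ∫ s in (0:ℝ)..t, a s with hAdef
  have hA : ∀ t, HasDerivAt A (a t) t := fun t =>
    intervalIntegral.integral_hasDerivAt_right (ha_cont.intervalIntegrable _ _)
      ha_cont.aestronglyMeasurable.stronglyMeasurableAtFilter ha_cont.continuousAt
  have hAd : Differentiable ℝ A := fun t => (hA t).differentiableAt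
  have hAc : Continuous A := hAd.continuous
  have hAmono : MonotoneOn A (Ici (0:ℝ)) := by
    refine monotoneOn_of_deriv_nonneg (convex_Ici 0) hAc.continuousOn
      (fun t _ => (hA t).differentiableAt.differentiableWithinAt) (fun t ht => ?_)
    rw [(hA t).deriv]
    exact ha_nonneg t (le_of_lt (by simpa using ht))
  have hdiv : ∀ T : ℝ, Tendsto (fun t => ∫ s in T..t, Real.exp (-A s)) atTop atTop := by
    intro T
    exact aux_tendsto_integral_atTop (Real.continuous_exp.comp hAc.neg)
      (fun t => Real.exp_pos _) ha_div T
  -- the function h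
  set h : ℝ → ℝ := fun t => deriv x t * Real.exp (A t) with hhdef
  have hhc : Continuous h := hx'c.mul (Real.continuous_exp.comp hAc)
  have hh : ∀ t, HasDerivAt h
      (deriv (deriv x) t * Real.exp (A t) + deriv x t * (Real.exp (A t) * a t)) t :=
    fun t => ((hx'd t).hasDerivAt).mul ((hA t).exp)
  have hh' : ∀ t, 0 ≤ t → HasDerivAt h (-(deriv G (x t) * Real.exp (A t))) t := by
    intro t ht
    have h1 := hh t
    have e : deriv (deriv x) t * Real.exp (A t) + deriv x t * (Real.exp (A t) * a t)
        = -(deriv G (x t) * Real.exp (A t)) := by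
      have h2 := hode t ht
      linear_combination Real.exp (A t) * h2
    rwa [e] at h1
  have hx'eq : ∀ t, deriv x t = h t * Real.exp (-A t) := by
    intro t
    simp only [hhdef]
    rw [mul_assoc, ← Real.exp_add]
    simp
  have hFTC : ∀ u v : ℝ, x v - x u = ∫ s in u..v, deriv x s := fun u v =>
    (intervalIntegral.integral_deriv_eq_sub (fun s _ => hxd s) (hx'c.intervalIntegrable _ _)).symm
  -- main argument
  intro c
  by_contra hcon
  push_neg at hcon
  set T := max c 0 with hTdef
  have hT0 : (0:ℝ) ≤ T := le_max_right _ _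
  have hxge : ∀ t, T ≤ t → α ≤ x t := fun t ht => hcon t (le_trans (le_max_left _ _) ht)
  -- h is nonincreasing on [T, ∞)
  have hanti : AntitoneOn h (Ici T) := by
    refine antitoneOn_of_deriv_nonpos (convex_Ici T) hhc.continuousOn
      (fun t _ => (hh t).differentiableAt.differentiableWithinAt) (fun t ht => ?_)
    have ht' : T < t := by simpa using ht
    rw [(hh' t (le_trans hT0 ht'.le)).deriv]
    have := hGnonneg (x t) (hxge t ht'.le)
    have := Real.exp_pos (A t)
    nlinarith
  -- h is nonnegative on [T, ∞)
  have hh0 : ∀ t, T ≤ t → 0 ≤ h t := by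
    by_contra hcon2
    push_neg at hcon2
    obtain ⟨t₁, ht₁, hneg⟩ := hcon2
    have key : ∀ t, t₁ ≤ t → x t - x t₁ ≤ h t₁ * ∫ s in t₁..t, Real.exp (-A s) := by
      intro t ht
      rw [hFTC t₁ t, ← intervalIntegral.integral_const_mul]
      refine intervalIntegral.integral_mono_on ht (hx'c.intervalIntegrable _ _)
        ((continuous_const.mul (Real.continuous_exp.comp hAc.neg)).intervalIntegrable _ _) ?_
      intro s hs
      rw [hx'eq s]
      have hhs : h s ≤ h t₁ :=
        hanti (mem_Ici.mpr ht₁) (mem_Ici.mpr (le_trans ht₁ hs.1)) hs.1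
      exact mul_le_mul_of_nonneg_right hhs (Real.exp_pos _).le
    have h1 : Tendsto (fun t => (-h t₁) * ∫ s in t₁..t, Real.exp (-A s)) atTop atTop :=
      (hdiv t₁).const_mul_atTop (by linarith)
    have h2 : Tendsto (fun t => h t₁ * ∫ s in t₁..t, Real.exp (-A s)) atTop atBot := by
      rw [← tendsto_neg_atTop_iff]
      simpa [neg_mul] using h1
    have h3 : ∀ᶠ t in atTop, h t₁ * (∫ s in t₁..t, Real.exp (-A s)) < α - x t₁ :=
      h2.eventually (eventually_lt_atBot _)
    obtain ⟨t, hlt, ht⟩ := (h3.and (eventually_ge_atTop t₁)).exists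
    have h4 := key t ht
    have h5 := hxge t (le_trans ht₁ ht)
    linarith
  -- hence x' ≥ 0 on [T, ∞)
  have hx'nonneg : ∀ t, T ≤ t → 0 ≤ deriv x t := by
    intro t ht
    have h1 : (0:ℝ) * Real.exp (A t) ≤ deriv x t * Real.exp (A t) := by
      simpa using hh0 t ht
    exact le_of_mul_le_mul_right h1 (Real.exp_pos _)
  have hxmono : MonotoneOn x (Ici T) :=
    monotoneOn_of_deriv_nonneg (convex_Ici T) hxd.continuous.continuousOn
      (fun t _ => (hxd t).differentiableWithinAt)
      (fun t ht => hx'nonneg t (le_of_lt (by simpa using ht)))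
  obtain ⟨C, hC⟩ := hx_bdd
  have hbdd : BddAbove (x '' Ici T) := by
    refine ⟨C, ?_⟩
    rintro y ⟨t, ht, rfl⟩
    exact le_trans (le_abs_self _) (hC t (le_trans hT0 ht))
  set L := sSup (x '' Ici T) with hLdef
  have hxleL : ∀ t, T ≤ t → x t ≤ L := fun t ht => le_csSup hbdd ⟨t, ht, rfl⟩
  -- L ≤ β
  have hLβ : L ≤ β := by
    by_contra hLb
    push_neg at hLb
    set m := (β + L) / 2 with hmdef
    have hm1 : β < m := by rw [hmdef]; linarith
    have hm2 : m < L := by rw [hmdef]; linarith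
    obtain ⟨y, ⟨t₂, ht₂, rfl⟩, hy⟩ :=
      exists_lt_of_lt_csSup (s := x '' Ici T) ⟨x T, ⟨T, mem_Ici.mpr le_rfl, rfl⟩⟩ hm2
    have hδ : 0 < deriv G m := hGpos m hm1
    have hkey : ∀ t, t₂ ≤ t → deriv G m ≤ deriv G (x t) := fun t ht =>
      hGmono (le_trans hy.le (hxmono (mem_Ici.mpr ht₂) (mem_Ici.mpr (le_trans ht₂ ht)) ht))
    set δ := deriv G m with hδdef
    set E2 := Real.exp (A t₂) with hE2def
    have hE2pos : 0 < E2 := Real.exp_pos _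
    have hg : AntitoneOn (fun t => h t + δ * E2 * t) (Ici t₂) := by
      refine antitoneOn_of_deriv_nonpos (convex_Ici t₂)
        (Continuous.continuousOn (hhc.add (continuous_const.mul continuous_id')))
        (fun t _ => (((hh t).add (((hasDerivAt_id t).const_mul (δ * E2)))).differentiableAt).differentiableWithinAt)
        (fun t ht => ?_)
      have ht' : t₂ < t := by simpa using ht
      have ht0 : (0:ℝ) ≤ t := le_trans (le_trans hT0 ht₂) ht'.le
      have hD : HasDerivAt (fun u => h u + δ * E2 * u)
          (-(deriv G (x t) * Real.exp (A t)) + δ * E2) t := by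
        have := (hh' t ht0).add ((hasDerivAt_id t).const_mul (δ * E2))
        simpa [Pi.add_def] using this
      rw [hD.deriv]
      have hexp : E2 ≤ Real.exp (A t) := Real.exp_le_exp.mpr
        (hAmono (mem_Ici.mpr (le_trans hT0 ht₂)) (mem_Ici.mpr ht0) ht'.le)
      have h6 := hkey t ht'.le
      have h7 : δ * E2 ≤ deriv G (x t) * Real.exp (A t) :=
        mul_le_mul h6 hexp hE2pos.le (le_trans hδ.le h6)
      linarith
    set t3 := t₂ + h t₂ / (δ * E2) + 1 with ht3def
    have hpos : 0 < δ * E2 := by positivity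
    have ht3 : t₂ ≤ t3 := by
      have h2 : 0 ≤ h t₂ := hh0 t₂ ht₂
      have h3 : 0 ≤ h t₂ / (δ * E2) := div_nonneg h2 hpos.le
      rw [ht3def]; linarith
    have hineq := hg (mem_Ici.mpr le_rfl) (mem_Ici.mpr ht3) ht3
    have h3 : 0 ≤ h t3 := hh0 t3 (le_trans ht₂ ht3)
    have hexpand : δ * E2 * t3 = δ * E2 * t₂ + h t₂ + δ * E2 := by
      have h4 : h t₂ / (δ * E2) * (δ * E2) = h t₂ := div_mul_cancel₀ _ hpos.ne'
      rw [ht3def, mul_add, mul_add, mul_one, mul_comm (δ * E2) (h t₂ / (δ * E2)), h4]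
    simp only at hineq
    linarith
  -- so x stays in [α, β] after T, and h is constant there
  have hIcc : ∀ t, T ≤ t → x t ∈ Icc α β := fun t ht => ⟨hxge t ht, le_trans (hxleL t ht) hLβ⟩
  have hmono2 : MonotoneOn h (Ici T) := by
    refine monotoneOn_of_deriv_nonneg (convex_Ici T) hhc.continuousOn
      (fun t _ => (hh t).differentiableAt.differentiableWithinAt) (fun t ht => ?_)
    have ht' : T < t := by simpa using ht
    rw [(hh' t (le_trans hT0 ht'.le)).deriv, hG0 (x t) (hIcc t ht'.le)]
    simp
  have hconst : ∀ t, T ≤ t → h t = h T := fun t ht =>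
    le_antisymm (hanti (mem_Ici.mpr le_rfl) (mem_Ici.mpr ht) ht)
      (hmono2 (mem_Ici.mpr le_rfl) (mem_Ici.mpr ht) ht)
  rcases (hh0 T le_rfl).eq_or_lt with hTeq | hTpos
  · -- stationary case : backward Gronwall, contradiction with hinit
    have hx'T : deriv x T = 0 := by
      have h1 : deriv x T * Real.exp (A T) = 0 := by
        simpa [hhdef] using hTeq.symm
      exact (mul_eq_zero.mp h1).resolve_right (Real.exp_ne_zero _)
    have hxT : x T ∈ Icc α β := hIcc T le_rfl
    have hcpt : IsCompact (x '' Icc 0 T) := isCompact_Icc.image hxd.continuous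
    obtain ⟨K, hK⟩ := hG'lip (x '' Icc 0 T) hcpt.isBounded
    obtain ⟨M, hM⟩ := (isCompact_Icc (a := (0:ℝ)) (b := T)).exists_bound_of_continuousOn
      ha_cont.continuousOn
    have hM0 : 0 ≤ M := le_trans (norm_nonneg _) (hM 0 ⟨le_rfl, hT0⟩)
    set Cc : ℝ := 1 + K + 2 * M with hCdef
    have hlip : ∀ p, p ∈ Icc (0:ℝ) T → |deriv G (x p)| ≤ K * |x p - x T| := by
      intro p hp
      have h1 := hK.dist_le_mul (x p) ⟨p, hp, rfl⟩ (x T) ⟨T, ⟨hT0, le_rfl⟩, rfl⟩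
      rw [Real.dist_eq, Real.dist_eq] at h1
      simpa [hG0 (x T) hxT] using h1
    set u : ℝ → ℝ := fun t => (x t - x T)^2 + (deriv x t)^2 with hudef
    have hu' : ∀ t, HasDerivAt u
        (2*(x t - x T)*deriv x t + 2*(deriv x t)*(deriv (deriv x) t)) t := by
      intro t
      have h1 : HasDerivAt (fun t => (x t - x T)^2) (2*(x t - x T)*deriv x t) t := by
        have := (((hxd t).hasDerivAt).sub_const (x T)).pow 2
        simpa [Pi.pow_def, mul_comm, mul_assoc, mul_left_comm] using this
      have h2 : HasDerivAt (fun t => (deriv x t)^2)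
          (2*(deriv x t)*(deriv (deriv x) t)) t := by
        have := ((hx'd t).hasDerivAt).pow 2
        simpa [Pi.pow_def, mul_comm, mul_assoc, mul_left_comm] using this
      exact h1.add h2
    have hD : ∀ s, HasDerivAt (fun t => u t * Real.exp (Cc * t))
        ((2*(x s - x T)*deriv x s + 2*(deriv x s)*(deriv (deriv x) s) + Cc * u s)
          * Real.exp (Cc * s)) s := by
      intro s
      have hexp : HasDerivAt (fun y => Real.exp (Cc * y)) (Real.exp (Cc * s) * Cc) s := by
        simpa using ((hasDerivAt_id s).const_mul Cc).exp
      have h1 := (hu' s).mul hexp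
      exact h1.congr_deriv (by ring)
    have hvmono : MonotoneOn (fun t => u t * Real.exp (Cc * t)) (Icc 0 T) := by
      refine monotoneOn_of_deriv_nonneg (convex_Icc 0 T)
        (Continuous.continuousOn (by
          have hucont : Continuous u := by
            have hc1 : Continuous fun t => (x t - x T) ^ 2 :=
              (hxd.continuous.sub continuous_const).pow 2
            have hc2 : Continuous fun t => (deriv x t) ^ 2 := hx'c.pow 2
            simpa [hudef, Pi.add_def] using hc1.add hc2
          exact hucont.mul (Real.continuous_exp.comp (continuous_const.mul continuous_id'))))
        (fun s _ => (hD s).differentiableAt.differentiableWithinAt) (fun s hs => ?_)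
      rw [interior_Icc] at hs
      have hs0 : (0:ℝ) ≤ s := hs.1.le
      have hsmem : s ∈ Icc (0:ℝ) T := ⟨hs.1.le, hs.2.le⟩
      rw [(hD s).deriv]
      apply mul_nonneg _ (Real.exp_pos _).le
      have hode' := hode s hs0
      have hlip' := hlip s hsmem
      have hMa : a s ≤ M := le_trans (le_abs_self _) (hM s hsmem)
      have ha0 := ha_nonneg s hs0
      have hxx : deriv (deriv x) s = -(a s * deriv x s) - deriv G (x s) := by linarith
      rw [hxx]
      simp only [hudef, hCdef]
      set p := x s - x T with hp
      set q := deriv x s with hq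
      set g := deriv G (x s) with hgg
      have hK0 : (0:ℝ) ≤ (K : ℝ) := K.coe_nonneg
      have habs1 : |2 * q * g| ≤ 2 * (|q| * ((K : ℝ) * |p|)) := by
        rw [abs_mul, abs_mul, abs_two]
        have h9 : |q| * |g| ≤ |q| * ((K : ℝ) * |p|) :=
          mul_le_mul_of_nonneg_left hlip' (abs_nonneg q)
        linarith
      have h10 : 2 * (|p| * |q|) ≤ |p| ^ 2 + |q| ^ 2 := by nlinarith [sq_nonneg (|p| - |q|)]
      have habs2 : 2 * (|q| * ((K : ℝ) * |p|)) ≤ (K : ℝ) * (p ^ 2 + q ^ 2) := by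
        have h11 := mul_le_mul_of_nonneg_left h10 hK0
        rw [sq_abs, sq_abs] at h11
        linarith
      have habs3 : 2 * q * g ≤ |2 * q * g| := le_abs_self _
      have haq : a s * q ^ 2 ≤ M * q ^ 2 := mul_le_mul_of_nonneg_right hMa (sq_nonneg q)
      have hMp : 0 ≤ M * p ^ 2 := mul_nonneg hM0 (sq_nonneg p)
      nlinarith [sq_nonneg (p + q)]
    have h0T := hvmono ⟨le_rfl, hT0⟩ ⟨hT0, le_rfl⟩ hT0
    have huT : u T = 0 := by simp [hudef, hx'T]
    simp only [huT, zero_mul, mul_zero, Real.exp_zero, mul_one] at h0T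
    have hu0pos : 0 ≤ u 0 := by
      simp only [hudef]
      positivity
    have hu0 : u 0 = 0 := le_antisymm h0T hu0pos
    simp only [hudef] at hu0
    have e1 : (x 0 - x T) ^ 2 = 0 :=
      le_antisymm (by nlinarith [sq_nonneg (deriv x 0)]) (sq_nonneg _)
    have e2 : (deriv x 0) ^ 2 = 0 :=
      le_antisymm (by nlinarith [sq_nonneg (x 0 - x T)]) (sq_nonneg _)
    have e3 : x 0 = x T := by
      have h12 := pow_eq_zero_iff (n := 2) (by norm_num) |>.mp e1
      linarith
    have e4 : deriv x 0 = 0 := pow_eq_zero_iff (n := 2) (by norm_num) |>.mp e2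
    exact hinit ⟨by rw [e3]; exact hxT, e4⟩
  · -- h T > 0 : x escapes to +∞, contradiction with x ≤ β
    have hxformula : ∀ t, T ≤ t → x t - x T = h T * ∫ s in T..t, Real.exp (-A s) := by
      intro t ht
      rw [hFTC T t, ← intervalIntegral.integral_const_mul]
      refine intervalIntegral.integral_congr fun s hs => ?_
      rw [uIcc_of_le ht] at hs
      rw [hx'eq s, hconst s hs.1]
    have htop : Tendsto (fun t => h T * ∫ s in T..t, Real.exp (-A s)) atTop atTop :=
      (hdiv T).const_mul_atTop hTpos
    have h3 : ∀ᶠ t in atTop, β - x T + 1 ≤ h T * ∫ s in T..t, Real.exp (-A s) :=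
      htop.eventually (eventually_ge_atTop _)
    obtain ⟨t, hge, ht⟩ := (h3.and (eventually_ge_atTop T)).exists
    have h4 := hxformula t ht
    have h5 := (hIcc t ht).2
    linarith

/-- Non-convergence of trajectories when `argmin G = [α, β]` is a nondegenerate interval
and `∫₀^∞ e^{-∫₀ᵗ a} dt = ∞`: the solution oscillates below `α` and above `β` at
arbitrarily large times, and in particular does not converge. -/
theorem stmt_19
    (a : ℝ → ℝ) (ha_cont : Continuous a) (ha_nonneg : ∀ t ≥ (0:ℝ), 0 ≤ a t)
    (ha_div : ¬ MeasureTheory.IntegrableOn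
      (fun t => Real.exp (-∫ s in (0:ℝ)..t, a s)) (Set.Ici 0))
    (G : ℝ → ℝ) (hGconv : ConvexOn ℝ Set.univ G) (hG : ContDiff ℝ 1 G)
    (hG'lip : ∀ s : Set ℝ, Bornology.IsBounded s →
      ∃ K : NNReal, LipschitzOnWith K (deriv G) s)
    (α β : ℝ) (hαβ : α < β)
    (hargmin : {y : ℝ | ∀ z, G y ≤ G z} = Set.Icc α β)
    (x : ℝ → ℝ) (hx : ContDiff ℝ 2 x)
    (hx_bdd : ∃ C, ∀ t ≥ (0:ℝ), |x t| ≤ C)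
    (hode : ∀ t ≥ (0:ℝ), deriv (deriv x) t + a t * deriv x t + deriv G (x t) = 0)
    (hinit : ¬ (x 0 ∈ Set.Icc α β ∧ deriv x 0 = 0)) :
    (¬ ∃ l : ℝ, Filter.Tendsto x Filter.atTop (nhds l)) ∧
    (∀ n : ℕ, ∃ t ≥ (n:ℝ), x t < α) ∧
    (∀ n : ℕ, ∃ t ≥ (n:ℝ), β < x t) := by
  have hGd : Differentiable ℝ G := hG.differentiable one_ne_zero
  have part2 : ∀ c : ℝ, ∃ t ≥ c, x t < α :=
    aux_osc a ha_cont ha_nonneg ha_div G hGconv hG hG'lip α β hαβ hargmin x hx hx_bdd hode hinit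
  -- the reflected system
  have hGconv' : ConvexOn ℝ Set.univ (fun y => G (-y)) := by
    refine ⟨convex_univ, fun p _ q _ w v hw hv hwv => ?_⟩
    have hrw : -(w • p + v • q) = w • (-p) + v • (-q) := by
      simp only [smul_eq_mul]; ring
    calc G (-(w • p + v • q)) = G (w • (-p) + v • (-q)) := by rw [hrw]
      _ ≤ w • G (-p) + v • G (-q) := hGconv.2 (mem_univ _) (mem_univ _) hw hv hwv
  have hG2 : ContDiff ℝ 1 (fun y => G (-y)) := hG.comp contDiff_id.neg
  have hdG : ∀ y : ℝ, HasDerivAt (fun y => G (-y)) (-(deriv G (-y))) y := by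
    intro y
    have h1 := HasDerivAt.comp y ((hGd (-y)).hasDerivAt) (hasDerivAt_neg y)
    simpa [Function.comp_def] using h1
  have hderivG' : deriv (fun y => G (-y)) = fun y => -(deriv G (-y)) :=
    funext fun y => (hdG y).deriv
  have hG'lip2 : ∀ s : Set ℝ, Bornology.IsBounded s →
      ∃ K : NNReal, LipschitzOnWith K (deriv (fun y => G (-y))) s := by
    intro s hs
    obtain ⟨K, hK⟩ := hG'lip (-s) hs.neg
    refine ⟨K, ?_⟩
    rw [hderivG']
    intro p hp q hq
    simp only
    calc edist (-(deriv G (-p))) (-(deriv G (-q)))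
        = edist (deriv G (-p)) (deriv G (-q)) := edist_neg_neg _ _
      _ ≤ K * edist (-p) (-q) := hK (Set.neg_mem_neg.mpr hp) (Set.neg_mem_neg.mpr hq)
      _ = K * edist p q := by rw [edist_neg_neg]
  have hargmin' : {y : ℝ | ∀ z, (fun y => G (-y)) y ≤ (fun y => G (-y)) z}
      = Set.Icc (-β) (-α) := by
    ext y
    simp only [mem_setOf_eq, mem_Icc]
    constructor
    · intro hy
      have h1 : -y ∈ {w : ℝ | ∀ z, G w ≤ G z} := fun z => by simpa using hy (-z)
      rw [hargmin] at h1
      exact ⟨by linarith [h1.2], by linarith [h1.1]⟩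
    · intro hy z
      have h1 : -y ∈ Set.Icc α β := ⟨by linarith [hy.2], by linarith [hy.1]⟩
      rw [← hargmin] at h1
      exact h1 (-z)
  have hdx : deriv (fun t => -x t) = fun t => -deriv x t := funext fun t => deriv.neg
  have hode' : ∀ t ≥ (0:ℝ), deriv (deriv (fun t => -x t)) t
      + a t * deriv (fun t => -x t) t + deriv (fun y => G (-y)) ((fun t => -x t) t) = 0 := by
    intro t ht
    have h1 := hode t ht
    rw [hdx, hderivG']
    have h2 : deriv (fun t => -deriv x t) t = -(deriv (deriv x) t) := deriv.neg
    rw [h2]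
    simp only [neg_neg]
    linarith
  have hinit' : ¬ ((fun t => -x t) 0 ∈ Set.Icc (-β) (-α) ∧ deriv (fun t => -x t) 0 = 0) := by
    rintro ⟨h1, h2⟩
    rw [hdx] at h2
    have h2' : -deriv x 0 = 0 := h2
    simp only [mem_Icc] at h1
    exact hinit ⟨⟨by linarith [h1.2], by linarith [h1.1]⟩, by linarith⟩
  obtain ⟨C, hC⟩ := hx_bdd
  have part3 : ∀ c : ℝ, ∃ t ≥ c, β < x t := by
    intro c
    obtain ⟨t, ht, hlt⟩ := aux_osc a ha_cont ha_nonneg ha_div (fun y => G (-y)) hGconv' hG2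
      hG'lip2 (-β) (-α) (by linarith) hargmin' (fun t => -x t) hx.neg
      ⟨C, fun t ht => by simpa using hC t ht⟩ hode' hinit' c
    exact ⟨t, ht, by simpa using hlt⟩
  refine ⟨?_, fun n => part2 n, fun n => part3 n⟩
  rintro ⟨l, hl⟩
  obtain ⟨N, hN⟩ := Metric.tendsto_atTop.mp hl ((β - α) / 2) (by linarith)
  obtain ⟨t, ht, hta⟩ := part2 N
  obtain ⟨s, hs, hsb⟩ := part3 N
  have h1 := hN t ht
  have h2 := hN s hs
  rw [Real.dist_eq] at h1 h2
  linarith [(abs_lt.mp h1).1, (abs_lt.mp h1).2, (abs_lt.mp h2).1, (abs_lt.mp h2).2]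
end
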